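/- arXiv:1609.03132 — 4 statements merged into one kernel-verified Lean document; each statement's English description precedes it below -/
import Mathlib

section
/- Let (E,d) be a metric space, δ ∈ (0,1) and T > 0. For every f in V^{δ,∞}([0,T];E) (i.e. f is δ-Hölder continuous), the Riesz type variation norms converge: lim_{p→∞} ‖f‖_{V^{δ,p};[s,t]} = ‖f‖_{V^{δ,∞};[s,t]} = sup_{s ≤ u < v ≤ t} d(f_u,f_v)/|v-u|^δ, for every subinterval [s,t] ⊆ [0,T]. -/
open scoped ENNReal NNReal
open MeasureTheory

/-- `u 0, u 1, ..., u n` are the points of a partition of `[s,t]`. -/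
def IsPart (s t : ℝ) (n : ℕ) (u : ℕ → ℝ) : Prop :=
  u 0 = s ∧ u n = t ∧ ∀ i < n, u i < u (i + 1)

/-- Riesz-type sum of `f` along a partition, with parameters `δ, p`. -/
noncomputable def rieszSum {E : Type*} [PseudoEMetricSpace E] (f : ℝ → E) (δ p : ℝ)
    (n : ℕ) (u : ℕ → ℝ) : ℝ≥0∞ :=
  ∑ i ∈ Finset.range n,
    edist (f (u i)) (f (u (i + 1))) ^ p / ENNReal.ofReal (u (i + 1) - u i) ^ (δ * p - 1)

/-- Riesz type variation seminorm `‖f‖_{V^{δ,p};[s,t]}`. -/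
noncomputable def VNorm {E : Type*} [PseudoEMetricSpace E] (f : ℝ → E) (δ p : ℝ)
    (s t : ℝ) : ℝ≥0∞ :=
  (⨆ n, ⨆ u, ⨆ _ : IsPart s t n u, rieszSum f δ p n u) ^ (1 / p)

/-- `q`-variation seminorm `‖f‖_{q-var;[s,t]}`. -/
noncomputable def qVar {E : Type*} [PseudoEMetricSpace E] (f : ℝ → E) (q : ℝ)
    (s t : ℝ) : ℝ≥0∞ :=
  (⨆ n, ⨆ u, ⨆ _ : IsPart s t n u,
    ∑ i ∈ Finset.range n, edist (f (u i)) (f (u (i + 1))) ^ q) ^ (1 / q)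

/-- `δ`-Hölder seminorm on `[s,t]`, i.e. `‖f‖_{V^{δ,∞};[s,t]}`. -/
noncomputable def holNorm {E : Type*} [PseudoEMetricSpace E] (f : ℝ → E) (δ : ℝ)
    (s t : ℝ) : ℝ≥0∞ :=
  ⨆ u, ⨆ v, ⨆ _ : s ≤ u ∧ u < v ∧ v ≤ t,
    edist (f u) (f v) / ENNReal.ofReal (v - u) ^ δ

/-- Nikolskii seminorm `‖f‖_{N^{δ,p};[s,t]}`. -/
noncomputable def nikNorm {E : Type*} [PseudoEMetricSpace E] (f : ℝ → E) (δ p : ℝ)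
    (s t : ℝ) : ℝ≥0∞ :=
  ⨆ h : ℝ, ⨆ _ : 0 < h ∧ h ≤ t - s,
    ENNReal.ofReal h ^ (-δ) *
      (∫⁻ r in Set.Ioc s (t - h), edist (f r) (f (r + h)) ^ p) ^ (1 / p)

/-- Refined Nikolskii seminorm `‖f‖_{\hat N^{δ,p};[s,t]}`. -/
noncomputable def nikHatNorm {E : Type*} [PseudoEMetricSpace E] (f : ℝ → E) (δ p : ℝ)
    (s t : ℝ) : ℝ≥0∞ :=
  (⨆ n, ⨆ u, ⨆ _ : IsPart s t n u,
    ∑ i ∈ Finset.range n, nikNorm f δ p (u i) (u (i + 1)) ^ p) ^ (1 / p)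

/-- Mixed Hölder-variation seminorm `‖f‖_{\tilde V^{δ,p};[s,t]}`. -/
noncomputable def tildeVNorm {E : Type*} [PseudoEMetricSpace E] (f : ℝ → E) (δ p : ℝ)
    (s t : ℝ) : ℝ≥0∞ :=
  (⨆ n, ⨆ u, ⨆ _ : IsPart s t n u,
    ∑ i ∈ Finset.range n,
      qVar f (1 / δ) (u i) (u (i + 1)) ^ p
        / ENNReal.ofReal (u (i + 1) - u i) ^ (δ * p - 1)) ^ (1 / p)

/-- Fractional Sobolev (Sobolev–Slobodeckij) seminorm `‖f‖_{W^{δ,p};[s,t]}`. -/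
noncomputable def sobNorm {E : Type*} [PseudoEMetricSpace E] (f : ℝ → E) (δ p : ℝ)
    (s t : ℝ) : ℝ≥0∞ :=
  (∫⁻ v in Set.Ioc s t, ∫⁻ u in Set.Ioc s t,
    edist (f u) (f v) ^ p / ENNReal.ofReal |v - u| ^ (1 + δ * p)) ^ (1 / p)

section VNormHelpers

open Filter

lemma isPart_mono {s t : ℝ} {n : ℕ} {u : ℕ → ℝ} (h : IsPart s t n u) :
    ∀ i j, i ≤ j → j ≤ n → u i ≤ u j := by
  intro i j hij hjn
  induction j, hij using Nat.le_induction with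
  | base => exact le_rfl
  | succ k hk ih =>
    exact (ih (by omega)).trans (h.2.2 k (by omega)).le

lemma sum_deltas {s t : ℝ} {n : ℕ} {u : ℕ → ℝ} (h : IsPart s t n u) :
    ∑ i ∈ Finset.range n, ENNReal.ofReal (u (i+1) - u i) = ENNReal.ofReal (t - s) := by
  rw [← ENNReal.ofReal_sum_of_nonneg]
  · congr 1
    rw [Finset.sum_range_sub (fun i => u i), h.1, h.2.1]
  · intro i hi
    rw [Finset.mem_range] at hi
    linarith [h.2.2 i hi]

lemma exists_part {s t u v : ℝ} (hsu : s ≤ u) (huv : u < v) (hvt : v ≤ t) :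
    ∃ n w j, IsPart s t n w ∧ j < n ∧ w j = u ∧ w (j+1) = v := by
  rcases eq_or_lt_of_le hsu with h1 | h1 <;> rcases eq_or_lt_of_le hvt with h2 | h2
  · refine ⟨1, fun i => if i = 0 then u else v, 0,
      ⟨by simp [h1], by simp [← h2], ?_⟩, by norm_num, by norm_num, by norm_num⟩
    intro i hi
    interval_cases i
    simpa using huv
  · refine ⟨2, fun i => if i = 0 then u else if i = 1 then v else t, 0,
      ⟨by simp [h1], by norm_num, ?_⟩, by norm_num, by norm_num, by norm_num⟩
    intro i hi
    interval_cases i <;> simp <;> linarith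
  · refine ⟨2, fun i => if i = 0 then s else if i = 1 then u else v, 1,
      ⟨by norm_num, by norm_num [← h2], ?_⟩, by norm_num, by norm_num, by norm_num⟩
    intro i hi
    interval_cases i <;> simp <;> linarith
  · refine ⟨3, fun i => if i = 0 then s else if i = 1 then u else if i = 2 then v else t, 1,
      ⟨by norm_num, by norm_num, ?_⟩, by norm_num, by norm_num, by norm_num⟩
    intro i hi
    interval_cases i <;> simp <;> linarith

lemma vnorm_lower {E : Type*} [PseudoEMetricSpace E] {f : ℝ → E} {δ p s t u v : ℝ}
    (hp : 0 < p) (hsu : s ≤ u) (huv : u < v) (hvt : v ≤ t) :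
    edist (f u) (f v) / ENNReal.ofReal (v - u) ^ (δ - 1/p) ≤ VNorm f δ p s t := by
  obtain ⟨n, w, j, hpart, hj, hwu, hwv⟩ := exists_part hsu huv hvt
  have hterm : edist (f u) (f v) ^ p / ENNReal.ofReal (v - u) ^ (δ * p - 1)
      ≤ rieszSum f δ p n w := by
    have := Finset.single_le_sum
      (f := fun i => edist (f (w i)) (f (w (i+1))) ^ p
        / ENNReal.ofReal (w (i+1) - w i) ^ (δ*p-1))
      (fun i _ => zero_le) (Finset.mem_range.mpr hj)
    rw [rieszSum]
    rwa [hwu, hwv] at this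
  have hsup : rieszSum f δ p n w
      ≤ (⨆ n, ⨆ u, ⨆ _ : IsPart s t n u, rieszSum f δ p n u) :=
    le_iSup₂_of_le n w (le_iSup_of_le hpart le_rfl)
  have h1 : (edist (f u) (f v) ^ p / ENNReal.ofReal (v - u) ^ (δ * p - 1)) ^ (1/p)
      ≤ VNorm f δ p s t := by
    unfold VNorm
    exact ENNReal.rpow_le_rpow (hterm.trans hsup) (by positivity)
  have e1 : (δ * p - 1) * (1/p) = δ - 1/p := by field_simp
  calc edist (f u) (f v) / ENNReal.ofReal (v - u) ^ (δ - 1/p)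
      = (edist (f u) (f v) ^ p / ENNReal.ofReal (v - u) ^ (δ * p - 1)) ^ (1/p) := by
        rw [ENNReal.div_rpow_of_nonneg _ _ (by positivity), ← ENNReal.rpow_mul,
          ← ENNReal.rpow_mul, mul_one_div_cancel hp.ne', ENNReal.rpow_one, e1]
    _ ≤ VNorm f δ p s t := h1

lemma vnorm_upper {E : Type*} [PseudoEMetricSpace E] {f : ℝ → E} {δ p s t : ℝ}
    (hδ : 0 < δ) (hp : 0 < p) :
    VNorm f δ p s t ≤ holNorm f δ s t * ENNReal.ofReal (t - s) ^ (1/p) := by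
  set H := holNorm f δ s t with hH
  have hsup : (⨆ n, ⨆ u, ⨆ _ : IsPart s t n u, rieszSum f δ p n u)
      ≤ H ^ p * ENNReal.ofReal (t - s) := by
    refine iSup₂_le fun n w => iSup_le fun hw => ?_
    have key : ∀ i < n, edist (f (w i)) (f (w (i+1))) ^ p /
        ENNReal.ofReal (w (i+1) - w i) ^ (δ*p-1)
        ≤ H ^ p * ENNReal.ofReal (w (i+1) - w i) := by
      intro i hi
      set b := ENNReal.ofReal (w (i+1) - w i) with hb
      have hΔ : 0 < w (i+1) - w i := sub_pos.mpr (hw.2.2 i hi)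
      have hb0 : b ≠ 0 := (ENNReal.ofReal_pos.mpr hΔ).ne'
      have hbt : b ≠ ⊤ := ENNReal.ofReal_ne_top
      have hbδ0 : b ^ δ ≠ 0 := (ENNReal.rpow_pos (pos_iff_ne_zero.mpr hb0) hbt).ne'
      have hbδt : b ^ δ ≠ ⊤ := ENNReal.rpow_ne_top_of_nonneg hδ.le hbt
      have hwi : s ≤ w i := by
        have := isPart_mono hw 0 i (Nat.zero_le _) hi.le
        rwa [hw.1] at this
      have hwt : w (i+1) ≤ t := by
        have := isPart_mono hw (i+1) n hi (le_refl n)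
        rwa [hw.2.1] at this
      have hpair : edist (f (w i)) (f (w (i+1))) / b ^ δ ≤ H := by
        rw [hH, holNorm]
        exact le_iSup₂_of_le (w i) (w (i+1))
          (le_iSup_of_le ⟨hwi, hw.2.2 i hi, hwt⟩ le_rfl)
      have hedist : edist (f (w i)) (f (w (i+1))) ≤ H * b ^ δ :=
        (ENNReal.div_le_iff_le_mul (Or.inl hbδ0) (Or.inl hbδt)).mp hpair
      have e1 : δ * p - (δ * p - 1) = 1 := by ring
      calc edist (f (w i)) (f (w (i+1))) ^ p / b ^ (δ*p-1)
          ≤ (H * b ^ δ) ^ p / b ^ (δ*p-1) := by gcongr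
        _ = H ^ p * b := by
            rw [ENNReal.mul_rpow_of_nonneg _ _ hp.le, ← ENNReal.rpow_mul,
              mul_div_assoc, ← ENNReal.rpow_sub _ _ hb0 hbt, e1, ENNReal.rpow_one]
    calc rieszSum f δ p n w
        ≤ ∑ i ∈ Finset.range n, H ^ p * ENNReal.ofReal (w (i+1) - w i) :=
          Finset.sum_le_sum fun i hi => key i (Finset.mem_range.mp hi)
      _ = H ^ p * ENNReal.ofReal (t - s) := by rw [← Finset.mul_sum, sum_deltas hw]
  calc VNorm f δ p s t
      ≤ (H ^ p * ENNReal.ofReal (t-s)) ^ (1/p) := by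
        unfold VNorm
        exact ENNReal.rpow_le_rpow hsup (by positivity)
    _ = H * ENNReal.ofReal (t-s) ^ (1/p) := by
        rw [ENNReal.mul_rpow_of_nonneg _ _ (by positivity), ← ENNReal.rpow_mul,
          mul_one_div_cancel hp.ne', ENNReal.rpow_one]

lemma holNorm_mono {E : Type*} [PseudoEMetricSpace E] {f : ℝ → E} {δ : ℝ}
    {s t s' t' : ℝ} (hs : s' ≤ s) (ht : t ≤ t') :
    holNorm f δ s t ≤ holNorm f δ s' t' := by
  refine iSup₂_le fun u v => iSup_le fun h => ?_
  exact le_iSup₂_of_le u v (le_iSup_of_le ⟨hs.trans h.1, h.2.1, h.2.2.trans ht⟩ le_rfl)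

end VNormHelpers

/-- as `p → ∞`, the Riesz type variation converges to the Hölder seminorm. -/
theorem tendsto_VNorm_atTop {E : Type*} [PseudoEMetricSpace E] (T δ : ℝ) (f : ℝ → E)
    (hT : 0 < T) (hδ : 0 < δ) (hδ1 : δ < 1)
    (hf : ContinuousOn f (Set.Icc 0 T)) (hhol : holNorm f δ 0 T ≠ ⊤) :
    ∀ s t, 0 ≤ s → s ≤ t → t ≤ T →
      Filter.Tendsto (fun p : ℝ => VNorm f δ p s t) Filter.atTop
        (nhds (holNorm f δ s t)) := by
  intro s t hs hst htT
  rcases eq_or_lt_of_le hst with rfl | hlt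
  · have h0 : holNorm f δ s s = 0 := by
      refine le_antisymm (iSup₂_le fun u v => iSup_le fun h => ?_) zero_le
      exact absurd ((h.1.trans_lt h.2.1).trans_le h.2.2) (lt_irrefl s)
    rw [h0]
    have hev : ∀ᶠ p : ℝ in Filter.atTop, (0:ℝ≥0∞) = VNorm f δ p s s := by
      filter_upwards [Filter.eventually_gt_atTop 0] with p hp
      refine (le_zero_iff.mp ?_).symm
      have := vnorm_upper (f := f) (s := s) (t := s) hδ hp
      rwa [h0, sub_self, ENNReal.ofReal_zero,
        ENNReal.zero_rpow_of_pos (by positivity), zero_mul] at this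
    exact Filter.Tendsto.congr' hev tendsto_const_nhds
  · set H := holNorm f δ s t with hH
    have hHfin : H ≠ ⊤ := ne_top_of_le_ne_top hhol (holNorm_mono hs htT)
    apply tendsto_of_le_liminf_of_limsup_le
    · rw [hH, holNorm]
      refine iSup₂_le fun u v => iSup_le fun hcon => ?_
      obtain ⟨h1, h2, h3⟩ := hcon
      set D := edist (f u) (f v) with hD
      set b := ENNReal.ofReal (v - u) with hb
      have hΔ : 0 < v - u := sub_pos.mpr h2
      have hb0 : b ≠ 0 := (ENNReal.ofReal_pos.mpr hΔ).ne'
      have hbt : b ≠ ⊤ := ENNReal.ofReal_ne_top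
      have hDfin : D ≠ ⊤ := by
        intro hDtop
        apply hhol
        refine top_le_iff.mp ?_
        calc (⊤:ℝ≥0∞) = D / b ^ δ := by
              rw [hDtop, ENNReal.top_div_of_ne_top
                (ENNReal.rpow_ne_top_of_nonneg hδ.le hbt)]
          _ ≤ holNorm f δ 0 T := by
              rw [holNorm]
              exact le_iSup₂_of_le u v
                (le_iSup_of_le ⟨hs.trans h1, h2, h3.trans htT⟩ le_rfl)
      have hlow : Filter.Tendsto (fun p : ℝ => D * b ^ (1/p - δ)) Filter.atTop
          (nhds (D / b ^ δ)) := by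
        have hbr : Filter.Tendsto (fun p : ℝ => b ^ (1/p - δ)) Filter.atTop
            (nhds (b ^ (-δ))) := by
          have h2' : Filter.Tendsto (fun p : ℝ => 1/p - δ) Filter.atTop (nhds (-δ)) := by
            simpa using tendsto_inv_atTop_zero.sub_const δ
          have hr := (Real.continuousAt_const_rpow hΔ.ne').tendsto.comp h2'
          simp_rw [hb, ENNReal.ofReal_rpow_of_pos hΔ]
          exact (ENNReal.continuous_ofReal.tendsto _).comp hr
        have h4 := ENNReal.Tendsto.const_mul hbr (Or.inr hDfin)
        rwa [ENNReal.rpow_neg, ← div_eq_mul_inv] at h4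
      have hev : ∀ᶠ p : ℝ in Filter.atTop,
          D * b ^ (1/p - δ) ≤ VNorm f δ p s t := by
        filter_upwards [Filter.eventually_gt_atTop 0] with p hp
        have hvl := vnorm_lower (f := f) (δ := δ) hp h1 h2 h3
        rw [show (1/p - δ) = -(δ - 1/p) by ring, ENNReal.rpow_neg, ← div_eq_mul_inv]
        exact hvl
      calc D / b ^ δ
          = Filter.liminf (fun p : ℝ => D * b ^ (1/p - δ)) Filter.atTop :=
            hlow.liminf_eq.symm
        _ ≤ Filter.liminf (fun p : ℝ => VNorm f δ p s t) Filter.atTop :=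
            Filter.liminf_le_liminf hev
    · have c0 : (0:ℝ) < t - s := sub_pos.mpr hlt
      have htend : Filter.Tendsto (fun p : ℝ => H * ENNReal.ofReal (t - s) ^ (1/p))
          Filter.atTop (nhds H) := by
        have h1 : Filter.Tendsto (fun p : ℝ => ENNReal.ofReal (t-s) ^ (1/p))
            Filter.atTop (nhds 1) := by
          have h2' : Filter.Tendsto (fun p : ℝ => (1:ℝ)/p) Filter.atTop (nhds 0) := by
            simpa using tendsto_inv_atTop_zero
          have hr := (Real.continuousAt_const_rpow c0.ne').tendsto.comp h2'
          simp only [Function.comp_def, Real.rpow_zero] at hr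
          simp_rw [ENNReal.ofReal_rpow_of_pos c0]
          have h5 := (ENNReal.continuous_ofReal.tendsto _).comp hr
          simpa [Function.comp_def] using h5
        have h6 := ENNReal.Tendsto.const_mul (a := H) h1 (Or.inl one_ne_zero)
        simpa using h6
      have hev : ∀ᶠ p : ℝ in Filter.atTop,
          VNorm f δ p s t ≤ H * ENNReal.ofReal (t-s) ^ (1/p) := by
        filter_upwards [Filter.eventually_gt_atTop 0] with p hp
        exact vnorm_upper hδ hp
      calc Filter.limsup (fun p : ℝ => VNorm f δ p s t) Filter.atTop
          ≤ Filter.limsup (fun p : ℝ => H * ENNReal.ofReal (t-s)^(1/p)) Filter.atTop :=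
            Filter.limsup_le_limsup hev
        _ = H := htend.limsup_eq
    · isBoundedDefault
    · isBoundedDefault
end

section
/- Let (E,d) be a metric space, T > 0, p ∈ [1,∞), and 0 < δ < δ' < 1. Then for every f ∈ N^{δ',p}([0,T];E) and every subinterval [s,t] ⊆ [0,T], the fractional Sobolev seminorm satisfies ‖f‖_{W^{δ,p};[s,t]} ≤ (2/((δ'-δ)p))^{1/p} · ‖f‖_{N^{δ',p};[s,t]} · (t-s)^{δ'-δ}. In particular N^{δ',p}([0,T];E) ⊆ W^{δ,p}([0,T];E). -/
open scoped ENNReal NNReal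
open MeasureTheory

lemma aux_rint (L α : ℝ) (hL : 0 ≤ L) (hα : 0 < α) :
    ∫⁻ h in Set.Ioc 0 L, ENNReal.ofReal h ^ (α - 1) = ENNReal.ofReal (L ^ α / α) := by
  have h1 : ∫⁻ h in Set.Ioc 0 L, ENNReal.ofReal h ^ (α - 1)
      = ∫⁻ h in Set.Ioc 0 L, ENNReal.ofReal (h ^ (α - 1)) :=
    setLIntegral_congr_fun measurableSet_Ioc
      (fun x hx => ENNReal.ofReal_rpow_of_pos hx.1)
  have hint : IntegrableOn (fun x : ℝ => x ^ (α - 1)) (Set.Ioc 0 L) volume :=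
    (intervalIntegral.intervalIntegrable_rpow' (by linarith)).1
  rw [h1, ← ofReal_integral_eq_lintegral_ofReal hint]
  · congr 1
    rw [← intervalIntegral.integral_of_le hL,
      integral_rpow (Or.inl (by linarith)), sub_add_cancel,
      Real.zero_rpow hα.ne', sub_zero]
  · filter_upwards [ae_restrict_mem measurableSet_Ioc] with x hx
    exact Real.rpow_nonneg hx.1.le _

lemma aux_nik {E : Type*} [PseudoEMetricSpace E] (f : ℝ → E) (δ p s t : ℝ)
    (hp : 0 < p) (hδ : 0 ≤ δ) {h : ℝ} (hh1 : 0 < h) (hh2 : h ≤ t - s) :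
    ∫⁻ r in Set.Ioc s (t - h), edist (f r) (f (r + h)) ^ p
      ≤ ENNReal.ofReal h ^ (δ * p) * nikNorm f δ p s t ^ p := by
  set I := ∫⁻ r in Set.Ioc s (t - h), edist (f r) (f (r + h)) ^ p with hI
  have hx0 : ENNReal.ofReal h ≠ 0 := (ENNReal.ofReal_pos.2 hh1).ne'
  have hxt : ENNReal.ofReal h ≠ ⊤ := ENNReal.ofReal_ne_top
  have hc0 : ENNReal.ofReal h ^ δ ≠ 0 :=
    (ENNReal.rpow_pos (ENNReal.ofReal_pos.2 hh1) hxt).ne'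
  have hct : ENNReal.ofReal h ^ δ ≠ ⊤ := ENNReal.rpow_ne_top_of_nonneg hδ hxt
  have hle : ENNReal.ofReal h ^ (-δ) * I ^ (1 / p) ≤ nikNorm f δ p s t := by
    rw [nikNorm]
    exact le_iSup₂ (f := fun h (_ : 0 < h ∧ h ≤ t - s) =>
      ENNReal.ofReal h ^ (-δ) *
        (∫⁻ r in Set.Ioc s (t - h), edist (f r) (f (r + h)) ^ p) ^ (1 / p)) h ⟨hh1, hh2⟩
  rw [ENNReal.rpow_neg] at hle
  have h2 : I ^ (1 / p) ≤ ENNReal.ofReal h ^ δ * nikNorm f δ p s t := by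
    calc I ^ (1 / p)
        = ENNReal.ofReal h ^ δ * ((ENNReal.ofReal h ^ δ)⁻¹ * I ^ (1 / p)) := by
          rw [← mul_assoc, ENNReal.mul_inv_cancel hc0 hct, one_mul]
      _ ≤ ENNReal.ofReal h ^ δ * nikNorm f δ p s t := mul_le_mul_right hle _
  have h3 := ENNReal.rpow_le_rpow h2 hp.le
  rwa [← ENNReal.rpow_mul, one_div, inv_mul_cancel₀ hp.ne', ENNReal.rpow_one,
    ENNReal.mul_rpow_of_nonneg _ _ hp.le, ← ENNReal.rpow_mul] at h3

/-- Nikolskii regularity embeds into fractional Sobolev regularity. -/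
theorem sobNorm_le_nikNorm {E : Type*} [PseudoEMetricSpace E] (T δ δ' p : ℝ) (f : ℝ → E)
    (hT : 0 < T) (hp : 1 ≤ p) (hδ : 0 < δ) (hδδ' : δ < δ') (hδ' : δ' < 1)
    (hf : ContinuousOn f (Set.Icc 0 T)) (hfin : nikNorm f δ' p 0 T ≠ ⊤) :
    ∀ s t, 0 ≤ s → s ≤ t → t ≤ T →
      sobNorm f δ p s t ≤
        ENNReal.ofReal (2 / ((δ' - δ) * p)) ^ (1 / p) * nikNorm f δ' p s t *
          ENNReal.ofReal (t - s) ^ (δ' - δ) := by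
  intro s t hs hst htT
  have hp0 : (0 : ℝ) < p := lt_of_lt_of_le one_pos hp
  set α : ℝ := (δ' - δ) * p with hαdef
  have hα : 0 < α := mul_pos (sub_pos.2 hδδ') hp0
  set K := nikNorm f δ' p s t with hKdef
  have hfs : ContinuousOn f (Set.Icc s t) := hf.mono (Set.Icc_subset_Icc hs htT)
  set ρ : Measure ℝ := volume.restrict (Set.Ioc s t) with hρ
  set ρ2 : Measure ℝ := volume.restrict (Set.Ioc 0 (t - s)) with hρ2
  set g : ℝ → ℝ → ℝ≥0∞ :=
    fun u v => edist (f u) (f v) ^ p / ENNReal.ofReal |v - u| ^ (1 + δ * p) with hg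
  set G : ℝ × ℝ → ℝ≥0∞ := fun z => g z.1 z.2 with hGdef
  set φ : ℝ → ℝ → ℝ≥0∞ :=
    fun u x => edist (f u) (f (u + x)) ^ p / ENNReal.ofReal x ^ (1 + δ * p) with hφ
  set Φ : ℝ × ℝ → ℝ≥0∞ := fun z => φ z.1 z.2 with hΦdef
  set D' : Set (ℝ × ℝ) := {z | z.1 + z.2 ≤ t} with hD'
  set Ψ : ℝ × ℝ → ℝ≥0∞ := D'.indicator Φ with hΨdef
  have hD'meas : MeasurableSet D' :=
    measurableSet_le (measurable_fst.add measurable_snd) measurable_const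
  -- measurability of G
  have hG : AEMeasurable G (ρ.prod ρ) := by
    have hnumc : ContinuousOn (fun z : ℝ × ℝ => edist (f z.1) (f z.2) ^ p)
        (Set.Icc s t ×ˢ Set.Icc s t) := by
      apply ENNReal.continuous_rpow_const.comp_continuousOn
      exact continuous_edist.comp_continuousOn
        ((hfs.comp continuous_fst.continuousOn fun z hz => hz.1).prodMk
          (hfs.comp continuous_snd.continuousOn fun z hz => hz.2))
    have hnum : AEMeasurable (fun z : ℝ × ℝ => edist (f z.1) (f z.2) ^ p) (ρ.prod ρ) := by
      refine (hnumc.aemeasurable (μ := volume) (measurableSet_Icc.prod measurableSet_Icc)).mono_measure ?_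
      rw [hρ, Measure.prod_restrict, ← Measure.volume_eq_prod]
      exact Measure.restrict_mono
        (Set.prod_mono Set.Ioc_subset_Icc_self Set.Ioc_subset_Icc_self) le_rfl
    have hden : Measurable (fun z : ℝ × ℝ => ENNReal.ofReal |z.2 - z.1| ^ (1 + δ * p)) :=
      (ENNReal.continuous_rpow_const.comp
        (ENNReal.continuous_ofReal.comp (continuous_snd.sub continuous_fst).abs)).measurable
    exact hnum.div hden.aemeasurable
  -- measurability of Ψ
  have hΨ : AEMeasurable Ψ (ρ.prod ρ2) := by
    rw [hΨdef, aemeasurable_indicator_iff hD'meas]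
    set S : Set (ℝ × ℝ) := {z | z.1 ∈ Set.Icc s t ∧ z.1 + z.2 ∈ Set.Icc s t} with hS
    have hSmeas : MeasurableSet S := by
      have : S = (fun z : ℝ × ℝ => z.1) ⁻¹' Set.Icc s t ∩
          (fun z : ℝ × ℝ => z.1 + z.2) ⁻¹' Set.Icc s t := rfl
      rw [this]
      exact (measurable_fst measurableSet_Icc).inter
        ((measurable_fst.add measurable_snd) measurableSet_Icc)
    have hnumc : ContinuousOn (fun z : ℝ × ℝ => edist (f z.1) (f (z.1 + z.2)) ^ p) S := by
      apply ENNReal.continuous_rpow_const.comp_continuousOn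
      exact continuous_edist.comp_continuousOn
        ((hfs.comp continuous_fst.continuousOn fun z hz => hz.1).prodMk
          (hfs.comp (continuous_fst.add continuous_snd).continuousOn fun z hz => hz.2))
    have hnum : AEMeasurable (fun z : ℝ × ℝ => edist (f z.1) (f (z.1 + z.2)) ^ p)
        ((ρ.prod ρ2).restrict D') := by
      refine (hnumc.aemeasurable (μ := volume) hSmeas).mono_measure ?_
      rw [hρ, hρ2, Measure.prod_restrict, Measure.restrict_restrict hD'meas,
        ← Measure.volume_eq_prod]
      refine Measure.restrict_mono ?_ le_rfl
      rintro ⟨u, x⟩ ⟨hz1, hz2⟩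
      simp only [Set.mem_prod, Set.mem_Ioc] at hz2
      refine ⟨⟨hz2.1.1.le, hz2.1.2⟩, ⟨?_, hz1⟩⟩
      have := hz2.1.1; have := hz2.2.1
      linarith
    have hden : Measurable (fun z : ℝ × ℝ => ENNReal.ofReal z.2 ^ (1 + δ * p)) :=
      (ENNReal.continuous_rpow_const.comp
        (ENNReal.continuous_ofReal.comp continuous_snd)).measurable
    exact hnum.div hden.aemeasurable
  -- symmetry of G
  set C : Set (ℝ × ℝ) := {z | z.1 ≤ z.2} with hC
  have hCmeas : MeasurableSet C := measurableSet_le measurable_fst measurable_snd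
  have hGsym : ∀ z : ℝ × ℝ, G z.swap = G z := by
    rintro ⟨u, v⟩
    simp only [hGdef, hg, Prod.swap]
    rw [edist_comm, abs_sub_comm]
  set A := ∫⁻ v in Set.Ioc s t, ∫⁻ u in Set.Ioc s t, g u v with hA
  set B := ∫⁻ z, C.indicator G z ∂(ρ.prod ρ) with hB
  have hAprod : A = ∫⁻ z, G z ∂(ρ.prod ρ) := by
    have huncurry : Function.uncurry (fun v u => g u v) = G := funext fun z => hGsym z
    rw [hA, lintegral_lintegral (f := fun v u => g u v) (by rw [huncurry]; exact hG)]
    exact lintegral_congr fun z => hGsym z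
  have hsplit : A ≤ 2 * B := by
    have h1 : A = B + ∫⁻ z, Cᶜ.indicator G z ∂(ρ.prod ρ) := by
      rw [hAprod, hB, ← lintegral_add_left' (hG.indicator hCmeas)]
      refine lintegral_congr fun z => ?_
      have := congrFun (Set.indicator_self_add_compl C G) z
      exact this.symm
    have h2 : ∫⁻ z, Cᶜ.indicator G z ∂(ρ.prod ρ) ≤ B := by
      have hmapswap : Measure.map Prod.swap (ρ.prod ρ) = ρ.prod ρ := Measure.prod_swap
      have hswapint : ∫⁻ z, Cᶜ.indicator G z ∂(ρ.prod ρ)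
          = ∫⁻ z, Cᶜ.indicator G (Prod.swap z) ∂(ρ.prod ρ) := by
        conv_lhs => rw [← hmapswap]
        exact lintegral_map' (by rw [hmapswap]; exact hG.indicator hCmeas.compl)
          measurable_swap.aemeasurable
      rw [hswapint, hB]
      refine lintegral_mono fun z => ?_
      rcases le_or_gt z.2 z.1 with h | h
      · rw [Set.indicator_of_notMem (by simp only [hC, Set.mem_compl_iff, Set.mem_setOf_eq,
          Prod.fst_swap, Prod.snd_swap, not_not]; exact h)]
        exact zero_le
      · rw [Set.indicator_of_mem (by simp only [hC, Set.mem_compl_iff, Set.mem_setOf_eq,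
            Prod.fst_swap, Prod.snd_swap, not_le]; exact h),
          Set.indicator_of_mem (show z ∈ C from h.le), hGsym]
    calc A = B + _ := h1
      _ ≤ B + B := add_le_add_right h2 B
      _ = 2 * B := (two_mul B).symm
  -- rewrite B as iterated integral over (u, h) and swap
  have hBconv : B = ∫⁻ x, ∫⁻ u, Ψ (u, x) ∂ρ ∂ρ2 := by
    have step1 : B = ∫⁻ u, ∫⁻ x, Ψ (u, x) ∂ρ2 ∂ρ := by
      rw [hB, lintegral_prod _ (hG.indicator hCmeas)]
      refine lintegral_congr_ae ?_
      filter_upwards [ae_restrict_mem measurableSet_Ioc] with u hu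
      -- hu : u ∈ Set.Ioc s t
      have e1 : ∫⁻ v, C.indicator G (u, v) ∂ρ = ∫⁻ v, (Set.Ici u).indicator (g u) v ∂ρ := by
        refine lintegral_congr fun v => ?_
        rcases le_or_gt u v with h | h
        · rw [Set.indicator_of_mem (show (u, v) ∈ C from h),
            Set.indicator_of_mem (show v ∈ Set.Ici u from h)]
        · rw [Set.indicator_of_notMem (show (u, v) ∉ C from not_le.2 h),
            Set.indicator_of_notMem (show v ∉ Set.Ici u from not_le.2 h)]
      have e3 : Set.Ici u ∩ Set.Ioc s t = Set.Icc u t := by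
        ext v
        simp only [Set.mem_inter_iff, Set.mem_Ici, Set.mem_Ioc, Set.mem_Icc]
        constructor
        · rintro ⟨h1, _, h3⟩; exact ⟨h1, h3⟩
        · rintro ⟨h1, h2⟩; exact ⟨h1, hu.1.trans_le h1, h2⟩
      have hpre : (fun x : ℝ => x + u) ⁻¹' Set.Ioc u t = Set.Ioc 0 (t - u) := by
        ext x
        simp only [Set.mem_preimage, Set.mem_Ioc]
        constructor <;> intro h <;> constructor <;> linarith [h.1, h.2]
      have heq7 : Set.Iic (t - u) ∩ Set.Ioc 0 (t - s) = Set.Ioc 0 (t - u) := by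
        ext x
        simp only [Set.mem_inter_iff, Set.mem_Iic, Set.mem_Ioc]
        have := hu.1
        constructor
        · rintro ⟨h1, h2, _⟩; exact ⟨h2, h1⟩
        · rintro ⟨h1, h2⟩; exact ⟨h2, h1, by linarith⟩
      calc ∫⁻ v, C.indicator G (u, v) ∂ρ
          = ∫⁻ v, (Set.Ici u).indicator (g u) v ∂ρ := e1
        _ = ∫⁻ v in Set.Ici u ∩ Set.Ioc s t, g u v := by
            rw [hρ, lintegral_indicator measurableSet_Ici,
              Measure.restrict_restrict measurableSet_Ici]
        _ = ∫⁻ v in Set.Icc u t, g u v := by rw [e3]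
        _ = ∫⁻ v in Set.Ioc u t, g u v := (setLIntegral_congr Ioc_ae_eq_Icc).symm
        _ = ∫⁻ x in Set.Ioc 0 (t - u), g u (x + u) := by
            rw [← (measurePreserving_add_right volume u).setLIntegral_comp_preimage_emb
              (measurableEmbedding_addRight u) (g u) (Set.Ioc u t), hpre]
        _ = ∫⁻ x in Set.Ioc 0 (t - u), φ u x := by
            refine setLIntegral_congr_fun measurableSet_Ioc (fun x hx => ?_)
            simp only [hg, hφ]
            rw [add_sub_cancel_right, abs_of_pos hx.1, add_comm x u]
        _ = ∫⁻ x in Set.Ioc 0 (t - s), (Set.Iic (t - u)).indicator (φ u) x := by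
            rw [lintegral_indicator measurableSet_Iic,
              Measure.restrict_restrict measurableSet_Iic, heq7]
        _ = ∫⁻ x, Ψ (u, x) ∂ρ2 := by
            rw [hρ2]
            refine lintegral_congr fun x => ?_
            simp only [hΨdef]
            rcases le_or_gt (u + x) t with hx | hx
            · rw [Set.indicator_of_mem (show x ∈ Set.Iic (t - u) by
                  simp only [Set.mem_Iic]; linarith),
                Set.indicator_of_mem (show (u, x) ∈ D' from hx)]
            · rw [Set.indicator_of_notMem (show x ∉ Set.Iic (t - u) by
                  simp only [Set.mem_Iic]; push_neg; linarith),
                Set.indicator_of_notMem (show (u, x) ∉ D' by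
                  simp only [hD', Set.mem_setOf_eq]; push_neg; exact hx)]
    rw [step1, ← lintegral_prod _ hΨ, lintegral_prod_symm _ hΨ]
  -- bound the inner integral using the Nikolskii norm
  have hBle : B ≤ ENNReal.ofReal ((t - s) ^ α / α) * K ^ p := by
    rw [hBconv]
    have step3 : ∫⁻ x, ∫⁻ u, Ψ (u, x) ∂ρ ∂ρ2
        ≤ ∫⁻ x, ENNReal.ofReal x ^ (α - 1) * K ^ p ∂ρ2 := by
      refine lintegral_mono_ae ?_
      filter_upwards [ae_restrict_mem measurableSet_Ioc] with h hh
      -- hh : h ∈ Set.Ioc 0 (t - s)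
      set x : ℝ≥0∞ := ENNReal.ofReal h with hx
      have hx0 : x ≠ 0 := (ENNReal.ofReal_pos.2 hh.1).ne'
      have hxt : x ≠ ⊤ := ENNReal.ofReal_ne_top
      set c : ℝ≥0∞ := (x ^ (1 + δ * p))⁻¹ with hc
      have hb0 : x ^ (1 + δ * p) ≠ 0 :=
        (ENNReal.rpow_pos (ENNReal.ofReal_pos.2 hh.1) hxt).ne'
      have hbt : x ^ (1 + δ * p) ≠ ⊤ :=
        ENNReal.rpow_ne_top_of_nonneg (by positivity) hxt
      have hct : c ≠ ⊤ := by
        rw [hc, ENNReal.inv_ne_top]; exact hb0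
      have hiic : Set.Iic (t - h) ∩ Set.Ioc s t = Set.Ioc s (t - h) := by
        ext w
        simp only [Set.mem_inter_iff, Set.mem_Iic, Set.mem_Ioc]
        have := hh.1
        constructor
        · rintro ⟨h1, h2, _⟩; exact ⟨h2, h1⟩
        · rintro ⟨h1, h2⟩; exact ⟨h2, h1, by linarith⟩
      calc ∫⁻ u, Ψ (u, h) ∂ρ
          = ∫⁻ u, (Set.Iic (t - h)).indicator (fun u => φ u h) u ∂ρ := by
            refine lintegral_congr fun u => ?_
            simp only [hΨdef]
            rcases le_or_gt (u + h) t with hv | hv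
            · rw [Set.indicator_of_mem (show (u, h) ∈ D' from hv),
                Set.indicator_of_mem (show u ∈ Set.Iic (t - h) by
                  simp only [Set.mem_Iic]; linarith)]
            · rw [Set.indicator_of_notMem (show (u, h) ∉ D' by
                  simp only [hD', Set.mem_setOf_eq]; push_neg; exact hv),
                Set.indicator_of_notMem (show u ∉ Set.Iic (t - h) by
                  simp only [Set.mem_Iic]; push_neg; linarith)]
        _ = ∫⁻ u in Set.Ioc s (t - h), φ u h := by
            rw [hρ, lintegral_indicator measurableSet_Iic,
              Measure.restrict_restrict measurableSet_Iic, hiic]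
        _ = (∫⁻ u in Set.Ioc s (t - h), edist (f u) (f (u + h)) ^ p) * c := by
            rw [← lintegral_mul_const' c _ hct]
            refine lintegral_congr fun u => ?_
            simp only [hφ, hc, hx]
            rw [div_eq_mul_inv]
        _ ≤ (x ^ (δ' * p) * K ^ p) * c := by
            refine mul_le_mul_left ?_ c
            exact aux_nik f δ' p s t hp0 (hδ.trans hδδ').le hh.1 hh.2
        _ = x ^ (α - 1) * K ^ p := by
            have hsplit2 : x ^ (δ' * p) = x ^ (α - 1) * x ^ (1 + δ * p) := by
              rw [← ENNReal.rpow_add _ _ hx0 hxt]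
              congr 1
              rw [hαdef]; ring
            calc x ^ (δ' * p) * K ^ p * c
                = x ^ (α - 1) * K ^ p * (x ^ (1 + δ * p) * c) := by rw [hsplit2]; ring
              _ = x ^ (α - 1) * K ^ p := by
                  rw [hc, ENNReal.mul_inv_cancel hb0 hbt, mul_one]
    refine step3.trans (le_of_eq ?_)
    rw [hρ2, lintegral_mul_const _ (ENNReal.measurable_ofReal.pow_const _),
      aux_rint (t - s) α (sub_nonneg.2 hst) hα]
  -- conclude
  have hcomb : A ≤ ENNReal.ofReal (2 / α) * ENNReal.ofReal (t - s) ^ α * K ^ p := by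
    refine hsplit.trans ?_
    rw [mul_comm (2 : ℝ≥0∞) B]
    calc B * 2 ≤ (ENNReal.ofReal ((t - s) ^ α / α) * K ^ p) * 2 := mul_le_mul_left hBle 2
      _ = ENNReal.ofReal (2 / α) * ENNReal.ofReal (t - s) ^ α * K ^ p := by
          rw [ENNReal.ofReal_rpow_of_nonneg (sub_nonneg.2 hst) hα.le]
          rw [show (2 : ℝ≥0∞) = ENNReal.ofReal 2 by simp]
          rw [mul_right_comm,
            ← ENNReal.ofReal_mul
              (div_nonneg (Real.rpow_nonneg (sub_nonneg.2 hst) _) hα.le),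
            ← ENNReal.ofReal_mul (div_nonneg (by norm_num) hα.le)]
          congr 2
          ring
  have hgoal : sobNorm f δ p s t = A ^ (1 / p) := by rw [sobNorm]
  rw [hgoal]
  refine (ENNReal.rpow_le_rpow hcomb (by positivity)).trans (le_of_eq ?_)
  rw [ENNReal.mul_rpow_of_nonneg _ _ (by positivity : (0:ℝ) ≤ 1 / p),
    ENNReal.mul_rpow_of_nonneg _ _ (by positivity : (0:ℝ) ≤ 1 / p),
    ← ENNReal.rpow_mul (ENNReal.ofReal (t - s)) α,
    ← ENNReal.rpow_mul K p]
  rw [show α * (1 / p) = δ' - δ by rw [hαdef]; field_simp,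
    show p * (1 / p) = 1 by field_simp, ENNReal.rpow_one]
  rw [hKdef]
  ring
end

section
/- Let (E,d) be a metric space, δ ∈ (0,1) and p ∈ (1,∞) with δ - 1/p > 0. If f ∈ N^{δ,p}([0,T];E), then f is (δ-1/p)-Hölder continuous and there is a constant C = C(δ,p) such that d(f_s, f_t) ≤ C · ‖f‖_{N^{δ,p};[s,t]} · (t-s)^{δ-1/p} for all [s,t] ⊆ [0,T]. -/
open scoped ENNReal NNReal
open MeasureTheory

section AuxProof

open Set

variable {E : Type*} [PseudoEMetricSpace E]

private lemma nik_le (g : ℝ → E) (δ p s t h : ℝ) (hh : 0 < h) (hht : h ≤ t - s) :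
    (∫⁻ r in Set.Ioc s (t - h), edist (g r) (g (r + h)) ^ p) ^ (1 / p)
      ≤ ENNReal.ofReal h ^ δ * nikNorm g δ p s t := by
  set X := (∫⁻ r in Set.Ioc s (t - h), edist (g r) (g (r + h)) ^ p) ^ (1 / p) with hX
  have h1 : ENNReal.ofReal h ^ (-δ) * X ≤ nikNorm g δ p s t := by
    unfold nikNorm
    exact le_iSup_of_le h (le_iSup (fun _ => ENNReal.ofReal h ^ (-δ) * X) ⟨hh, hht⟩)
  have hne : ENNReal.ofReal h ≠ 0 := by
    simp [ENNReal.ofReal_eq_zero, not_le, hh]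
  have hnt : ENNReal.ofReal h ≠ ⊤ := ENNReal.ofReal_ne_top
  have key : ENNReal.ofReal h ^ δ * (ENNReal.ofReal h ^ (-δ) * X) = X := by
    rw [← mul_assoc, ← ENNReal.rpow_add _ _ hne hnt]
    simp
  calc X = ENNReal.ofReal h ^ δ * (ENNReal.ofReal h ^ (-δ) * X) := key.symm
    _ ≤ ENNReal.ofReal h ^ δ * nikNorm g δ p s t := by
        exact mul_le_mul_right h1 _

private lemma lemA (g : ℝ → E) (hg : Continuous g) {δ p s t h : ℝ} (hp : 1 < p)
    (hh : 0 < h) (hht : h ≤ t - s) {A : Set ℝ} (hAsub : A ⊆ Set.Ioc s (t - h)) :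
    ∫⁻ u in A, edist (g u) (g (u + h)) ≤
      volume A ^ (1 - 1 / p) * (ENNReal.ofReal h ^ δ * nikNorm g δ p s t) := by
  have hp0 : (p : ℝ) ≠ 0 := by positivity
  have hq : Real.HolderConjugate p (p / (p - 1)) := (Real.holderConjugate_iff_eq_conjExponent hp).2 rfl
  have hmf : Measurable fun u => edist (g u) (g (u + h)) :=
    (hg.edist (hg.comp (continuous_add_right h))).measurable
  have hold := ENNReal.lintegral_mul_le_Lp_mul_Lq (volume.restrict A) hq
    hmf.aemeasurable (aemeasurable_const (b := (1 : ℝ≥0∞)))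
  simp only [Pi.mul_apply, mul_one, ENNReal.one_rpow, lintegral_one,
    Measure.restrict_apply_univ] at hold
  have hexp : 1 / (p / (p - 1)) = 1 - 1 / p := by
    rw [one_div_div]
    field_simp
  rw [hexp] at hold
  calc ∫⁻ u in A, edist (g u) (g (u + h))
      ≤ (∫⁻ u in A, edist (g u) (g (u + h)) ^ p) ^ (1 / p) * volume A ^ (1 - 1 / p) := hold
    _ ≤ (∫⁻ r in Set.Ioc s (t - h), edist (g r) (g (r + h)) ^ p) ^ (1 / p)
          * volume A ^ (1 - 1 / p) := by
        refine mul_le_mul_left (ENNReal.rpow_le_rpow ?_ (by positivity)) _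
        exact lintegral_mono_set hAsub
    _ ≤ (ENNReal.ofReal h ^ δ * nikNorm g δ p s t) * volume A ^ (1 - 1 / p) :=
        mul_le_mul_left (nik_le g δ p s t h hh hht) _
    _ = volume A ^ (1 - 1 / p) * (ENNReal.ofReal h ^ δ * nikNorm g δ p s t) := mul_comm _ _

end AuxProof

section AuxProofB

variable {E : Type*} [PseudoEMetricSpace E]

private lemma lemB (g : ℝ → E) (hg : Continuous g) {δ p s t a ℓ : ℝ}
    (hδ : 0 < δ) (hp : 1 < p) (hℓ : 0 < ℓ)
    (hsub : Set.Ioc a (a + ℓ) ⊆ Set.Ioc s t)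
    {K₁ K₂ : Set ℝ} (hK₁ : MeasurableSet K₁) (hK₂ : MeasurableSet K₂)
    (h1 : K₁ ⊆ Set.Ioc a (a + ℓ)) (h2 : K₂ ⊆ Set.Ioc a (a + ℓ)) :
    ∫⁻ v in K₂, ∫⁻ u in K₁, edist (g u) (g v) ≤
      ENNReal.ofReal (2 * ℓ) *
        (ENNReal.ofReal ℓ ^ (1 - 1 / p) * (ENNReal.ofReal ℓ ^ δ * nikNorm g δ p s t)) := by
  set B := ENNReal.ofReal ℓ ^ (1 - 1 / p) * (ENNReal.ofReal ℓ ^ δ * nikNorm g δ p s t) with hB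
  -- basic geometry
  have hsa : s ≤ a := by
    by_contra hc
    push_neg at hc
    have hmem : min (a + ℓ) s ∈ Set.Ioc a (a + ℓ) :=
      ⟨lt_min (by linarith) hc, min_le_left _ _⟩
    have := (hsub hmem).1
    have := min_le_right (a + ℓ) s
    linarith
  have hat : a + ℓ ≤ t := (hsub ⟨by linarith, le_rfl⟩).2
  have hℓts : ℓ ≤ t - s := by linarith
  -- the common bound
  have bnd : ∀ (h' : ℝ) (C : Set ℝ), C ⊆ Set.Ioc s (t - h') → C ⊆ Set.Ioc a (a + ℓ) →
      0 < h' → h' ≤ ℓ → ∫⁻ r in C, edist (g r) (g (r + h')) ≤ B := by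
    intro h' C hCs hCa hh' hh'ℓ
    calc ∫⁻ r in C, edist (g r) (g (r + h'))
        ≤ volume C ^ (1 - 1 / p) * (ENNReal.ofReal h' ^ δ * nikNorm g δ p s t) :=
          lemA g hg hp hh' (by linarith) hCs
      _ ≤ B := by
          rw [hB]
          refine mul_le_mul' (ENNReal.rpow_le_rpow ?_ ?_)
            (mul_le_mul_left (ENNReal.rpow_le_rpow ?_ hδ.le) _)
          · calc volume C ≤ volume (Set.Ioc a (a + ℓ)) := measure_mono hCa
              _ = ENNReal.ofReal ℓ := by rw [Real.volume_Ioc]; ring_nf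
          · have := hp
            have : 0 < 1 - 1/p := by
              have : 1/p < 1 := by
                rw [div_lt_one (by linarith)]; linarith
              linarith
            linarith
          · exact ENNReal.ofReal_le_ofReal hh'ℓ
  -- set up the 2d function
  set S : Set (ℝ × ℝ) := {q : ℝ × ℝ | q.1 ∈ K₂ ∧ q.1 + q.2 ∈ K₁} with hS
  have hSmeas : MeasurableSet S := by
    have e : S = (fun q : ℝ × ℝ => q.1) ⁻¹' K₂ ∩ (fun q : ℝ × ℝ => q.1 + q.2) ⁻¹' K₁ := rfl
    rw [e]
    exact (measurable_fst hK₂).inter ((measurable_fst.add measurable_snd) hK₁)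
  set H : ℝ → ℝ → ℝ≥0∞ := fun v w =>
    S.indicator (fun q : ℝ × ℝ => edist (g (q.1 + q.2)) (g q.1)) (v, w) with hH
  have hHmeas : Measurable (Function.uncurry H) := by
    have : Function.uncurry H =
        S.indicator (fun q : ℝ × ℝ => edist (g (q.1 + q.2)) (g q.1)) := rfl
    rw [this]
    exact Measurable.indicator
      ((hg.comp (continuous_fst.add continuous_snd)).edist (hg.comp continuous_fst)).measurable
      hSmeas
  -- step 1 : rewrite as iterated full-space integral
  have step1 : ∫⁻ v in K₂, ∫⁻ u in K₁, edist (g u) (g v) = ∫⁻ v, ∫⁻ w, H v w := by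
    rw [← lintegral_indicator hK₂]
    refine lintegral_congr fun v => ?_
    by_cases hv : v ∈ K₂
    · rw [Set.indicator_of_mem hv, ← lintegral_indicator hK₁,
        ← lintegral_add_left_eq_self (fun u => K₁.indicator (fun u => edist (g u) (g v)) u) v]
      refine lintegral_congr fun w => ?_
      by_cases hw : v + w ∈ K₁
      · rw [Set.indicator_of_mem hw]
        exact (Set.indicator_of_mem (show (v, w) ∈ S from ⟨hv, hw⟩)
          (fun q : ℝ × ℝ => edist (g (q.1 + q.2)) (g q.1))).symm
      · rw [Set.indicator_of_notMem hw]
        exact (Set.indicator_of_notMem (show (v, w) ∉ S from fun hc => hw hc.2)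
          (fun q : ℝ × ℝ => edist (g (q.1 + q.2)) (g q.1))).symm
    · rw [Set.indicator_of_notMem hv]
      symm
      have : ∀ w, H v w = 0 := fun w =>
        Set.indicator_of_notMem (show (v, w) ∉ S from fun hc => hv hc.1)
          (fun q : ℝ × ℝ => edist (g (q.1 + q.2)) (g q.1))
      simp [this]
  -- step 2 : swap
  have step2 : ∫⁻ v, ∫⁻ w, H v w = ∫⁻ w, ∫⁻ v, H v w :=
    lintegral_lintegral_swap hHmeas.aemeasurable
  -- step 3 : pointwise bound in w
  have step3 : ∀ w, (∫⁻ v, H v w) ≤ (Set.Ioo (-ℓ) ℓ).indicator (fun _ => B) w := by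
    intro w
    have hAw : MeasurableSet (K₂ ∩ {v : ℝ | v + w ∈ K₁}) :=
      hK₂.inter ((measurable_add_const w) hK₁)
    have hHrw : ∀ v, H v w = (K₂ ∩ {v : ℝ | v + w ∈ K₁}).indicator
        (fun v => edist (g (v + w)) (g v)) v := by
      intro v
      by_cases hv : v ∈ K₂ ∩ {v : ℝ | v + w ∈ K₁}
      · rw [Set.indicator_of_mem hv]
        exact Set.indicator_of_mem (show (v, w) ∈ S from ⟨hv.1, hv.2⟩)
          (fun q : ℝ × ℝ => edist (g (q.1 + q.2)) (g q.1))
      · rw [Set.indicator_of_notMem hv]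
        exact Set.indicator_of_notMem (show (v, w) ∉ S from fun hc => hv ⟨hc.1, hc.2⟩)
          (fun q : ℝ × ℝ => edist (g (q.1 + q.2)) (g q.1))
    have hint : ∫⁻ v, H v w = ∫⁻ v in K₂ ∩ {v : ℝ | v + w ∈ K₁},
        edist (g (v + w)) (g v) := by
      rw [← lintegral_indicator hAw]
      exact lintegral_congr hHrw
    by_cases hw : w ∈ Set.Ioo (-ℓ) ℓ
    · rw [Set.indicator_of_mem hw, hint]
      rcases lt_trichotomy w 0 with hneg | hzero | hpos
      · -- negative shift
        set h' := -w with hh'def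
        have hh' : 0 < h' := by rw [hh'def]; linarith
        have trans : ∫⁻ v in K₂ ∩ {v : ℝ | v + w ∈ K₁}, edist (g (v + w)) (g v)
            = ∫⁻ r in K₁ ∩ {r : ℝ | r + h' ∈ K₂}, edist (g r) (g (r + h')) := by
          rw [← lintegral_indicator hAw,
            ← lintegral_add_left_eq_self
              (fun v => (K₂ ∩ {v : ℝ | v + w ∈ K₁}).indicator
                (fun v => edist (g (v + w)) (g v)) v) h',
            ← lintegral_indicator (show MeasurableSet (K₁ ∩ {r : ℝ | r + h' ∈ K₂}) from
              hK₁.inter ((measurable_add_const h') hK₂))]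
          refine lintegral_congr fun r => ?_
          have e1 : h' + r + w = r := by rw [hh'def]; ring
          have e2 : h' + r = r + h' := by ring
          by_cases hr : r ∈ K₁ ∩ {r : ℝ | r + h' ∈ K₂}
          · have hmem : h' + r ∈ K₂ ∩ {v : ℝ | v + w ∈ K₁} := by
              constructor
              · rw [e2]; exact hr.2
              · rw [Set.mem_setOf_eq, e1]; exact hr.1
            rw [Set.indicator_of_mem hmem, Set.indicator_of_mem hr, e1, e2]
          · have hnmem : h' + r ∉ K₂ ∩ {v : ℝ | v + w ∈ K₁} := by
              intro hc
              refine hr ⟨?_, ?_⟩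
              · have h3 := hc.2
                rw [Set.mem_setOf_eq, e1] at h3
                exact h3
              · rw [Set.mem_setOf_eq, ← e2]; exact hc.1
            rw [Set.indicator_of_notMem hnmem, Set.indicator_of_notMem hr]
        rw [trans]
        refine bnd h' _ ?_ (fun r hr => h1 hr.1) hh' (by linarith [hw.1])
        intro r hr
        have hr1 := hsub (h1 hr.1)
        have hr2 := hsub (h2 hr.2)
        exact ⟨hr1.1, by linarith [hr2.2, hh'def]⟩
      · -- zero shift
        subst hzero
        have : ∀ v, edist (g (v + 0)) (g v) = 0 := by
          intro v; rw [add_zero, edist_self]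
        calc ∫⁻ v in K₂ ∩ {v : ℝ | v + 0 ∈ K₁}, edist (g (v + 0)) (g v)
            = 0 := by simp [this]
          _ ≤ B := zero_le
      · -- positive shift
        have ecomm : ∫⁻ v in K₂ ∩ {v : ℝ | v + w ∈ K₁}, edist (g (v + w)) (g v)
            = ∫⁻ v in K₂ ∩ {v : ℝ | v + w ∈ K₁}, edist (g v) (g (v + w)) :=
          lintegral_congr fun v => edist_comm _ _
        rw [ecomm]
        refine bnd w _ ?_ (fun v hv => h2 hv.1) hpos (by linarith [hw.2])
        intro v hv
        have hv1 := hsub (h2 hv.1)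
        have hv2 := hsub (h1 hv.2)
        exact ⟨hv1.1, by linarith [hv2.2]⟩
    · rw [Set.indicator_of_notMem hw, hint]
      have hempty : K₂ ∩ {v : ℝ | v + w ∈ K₁} = ∅ := by
        ext v
        simp only [Set.mem_inter_iff, Set.mem_setOf_eq, Set.mem_empty_iff_false, iff_false]
        rintro ⟨hv1, hv2⟩
        have hb1 := h2 hv1
        have hb2 := h1 hv2
        exact hw ⟨by linarith [hb1.2, hb2.1], by linarith [hb1.1, hb2.2]⟩
      rw [hempty]
      simp
  -- conclude
  calc ∫⁻ v in K₂, ∫⁻ u in K₁, edist (g u) (g v)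
      = ∫⁻ w, ∫⁻ v, H v w := by rw [step1, step2]
    _ ≤ ∫⁻ w, (Set.Ioo (-ℓ) ℓ).indicator (fun _ => B) w := lintegral_mono step3
    _ = B * volume (Set.Ioo (-ℓ) ℓ) := by
        rw [lintegral_indicator measurableSet_Ioo, setLIntegral_const]
    _ = ENNReal.ofReal (2 * ℓ) * B := by
        rw [Real.volume_Ioo, mul_comm]
        congr 1
        ring_nf

end AuxProofB

section AuxProofC

variable {E : Type*} [PseudoEMetricSpace E]

private lemma chain_step (g : ℝ → E) (hg : Continuous g) {δ p s t : ℝ}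
    (hδ : 0 < δ) (hp : 1 < p) {a b ℓ : ℝ} (hℓ : 0 < ℓ)
    (hsubI : Set.Ioc a (a + ℓ) ⊆ Set.Ioc s t)
    (hJ : Set.Ioc b (b + ℓ / 2) ⊆ Set.Ioc a (a + ℓ)) (x : ℝ) :
    (ENNReal.ofReal ℓ)⁻¹ * ∫⁻ u in Set.Ioc a (a + ℓ), edist (g x) (g u) ≤
      (ENNReal.ofReal (ℓ / 2))⁻¹ * (∫⁻ v in Set.Ioc b (b + ℓ / 2), edist (g x) (g v)) +
        ENNReal.ofReal (4 * ℓ ^ (δ - 1 / p)) * nikNorm g δ p s t := by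
  have hvolI : volume (Set.Ioc a (a + ℓ)) = ENNReal.ofReal ℓ := by
    rw [Real.volume_Ioc]; congr 1; ring
  have hvolJ : volume (Set.Ioc b (b + ℓ / 2)) = ENNReal.ofReal (ℓ / 2) := by
    rw [Real.volume_Ioc]; congr 1; ring
  have hne : ENNReal.ofReal ℓ ≠ 0 := by simp [ENNReal.ofReal_eq_zero, not_le, hℓ]
  have hnt : ENNReal.ofReal ℓ ≠ ⊤ := ENNReal.ofReal_ne_top
  have hne2 : ENNReal.ofReal (ℓ / 2) ≠ 0 := by
    simp only [ne_eq, ENNReal.ofReal_eq_zero, not_le]; linarith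
  have hnt2 : ENNReal.ofReal (ℓ / 2) ≠ ⊤ := ENNReal.ofReal_ne_top
  set X := ∫⁻ u in Set.Ioc a (a + ℓ), edist (g x) (g u) with hX
  set A := ∫⁻ v in Set.Ioc b (b + ℓ / 2), edist (g x) (g v) with hA
  set Nik := nikNorm g δ p s t with hNik
  set C := ENNReal.ofReal (2 * ℓ) *
    (ENNReal.ofReal ℓ ^ (1 - 1 / p) * (ENNReal.ofReal ℓ ^ δ * Nik)) with hC
  have htri : ∀ v ∈ Set.Ioc b (b + ℓ / 2),
      X ≤ edist (g x) (g v) * ENNReal.ofReal ℓ +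
        ∫⁻ u in Set.Ioc a (a + ℓ), edist (g u) (g v) := by
    intro v hv
    calc X ≤ ∫⁻ u in Set.Ioc a (a + ℓ), (edist (g x) (g v) + edist (g v) (g u)) :=
          lintegral_mono fun u => edist_triangle _ _ _
      _ = edist (g x) (g v) * ENNReal.ofReal ℓ +
            ∫⁻ u in Set.Ioc a (a + ℓ), edist (g v) (g u) := by
          rw [lintegral_add_left measurable_const, setLIntegral_const, hvolI]
      _ = edist (g x) (g v) * ENNReal.ofReal ℓ +
            ∫⁻ u in Set.Ioc a (a + ℓ), edist (g u) (g v) := by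
          congr 1
          exact lintegral_congr fun u => edist_comm _ _
  have h2 : X * ENNReal.ofReal (ℓ / 2) ≤
      A * ENNReal.ofReal ℓ +
        ∫⁻ v in Set.Ioc b (b + ℓ / 2), ∫⁻ u in Set.Ioc a (a + ℓ), edist (g u) (g v) := by
    calc X * ENNReal.ofReal (ℓ / 2)
        = ∫⁻ _ in Set.Ioc b (b + ℓ / 2), X := by rw [setLIntegral_const, hvolJ]
      _ ≤ ∫⁻ v in Set.Ioc b (b + ℓ / 2), (edist (g x) (g v) * ENNReal.ofReal ℓ +
            ∫⁻ u in Set.Ioc a (a + ℓ), edist (g u) (g v)) :=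
          setLIntegral_mono' measurableSet_Ioc htri
      _ = (∫⁻ v in Set.Ioc b (b + ℓ / 2), edist (g x) (g v) * ENNReal.ofReal ℓ) +
            ∫⁻ v in Set.Ioc b (b + ℓ / 2), ∫⁻ u in Set.Ioc a (a + ℓ), edist (g u) (g v) := by
          rw [lintegral_add_left ((continuous_const.edist hg).measurable.mul_const _)]
      _ = A * ENNReal.ofReal ℓ +
            ∫⁻ v in Set.Ioc b (b + ℓ / 2), ∫⁻ u in Set.Ioc a (a + ℓ), edist (g u) (g v) := by
          rw [lintegral_mul_const _ (continuous_const.edist hg).measurable]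
  have h3 : ∫⁻ v in Set.Ioc b (b + ℓ / 2), ∫⁻ u in Set.Ioc a (a + ℓ), edist (g u) (g v) ≤ C :=
    lemB g hg hδ hp hℓ hsubI measurableSet_Ioc measurableSet_Ioc (subset_refl _) hJ
  have h5 : X ≤ (A * ENNReal.ofReal ℓ + C) / ENNReal.ofReal (ℓ / 2) :=
    (ENNReal.le_div_iff_mul_le (Or.inl hne2) (Or.inl hnt2)).2 (h2.trans (add_le_add_right h3 _))
  have hreal : ℓ⁻¹ * (ℓ / 2)⁻¹ * (2 * ℓ) * ℓ ^ (1 - 1 / p) * ℓ ^ δ = 4 * ℓ ^ (δ - 1 / p) := by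
    have e1 : ℓ ^ (1 - 1 / p) * ℓ ^ δ = ℓ ^ (1 - 1 / p + δ) := (Real.rpow_add hℓ _ _).symm
    have e2 : ℓ ^ (1 - 1 / p + δ) = ℓ ^ (δ - 1 / p) * ℓ := by
      rw [show (1 : ℝ) - 1 / p + δ = (δ - 1 / p) + 1 by ring, Real.rpow_add hℓ, Real.rpow_one]
    rw [mul_assoc (ℓ⁻¹ * (ℓ / 2)⁻¹ * (2 * ℓ)), e1, e2]
    field_simp
    ring
  have hconst : (ENNReal.ofReal ℓ)⁻¹ * ((ENNReal.ofReal (ℓ / 2))⁻¹ * C) =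
      ENNReal.ofReal (4 * ℓ ^ (δ - 1 / p)) * Nik := by
    rw [hC, ← ENNReal.ofReal_inv_of_pos hℓ, ← ENNReal.ofReal_inv_of_pos (by linarith : 0 < ℓ / 2),
      ENNReal.ofReal_rpow_of_pos hℓ, ENNReal.ofReal_rpow_of_pos hℓ]
    calc ENNReal.ofReal ℓ⁻¹ * (ENNReal.ofReal (ℓ / 2)⁻¹ * (ENNReal.ofReal (2 * ℓ) *
          (ENNReal.ofReal (ℓ ^ (1 - 1 / p)) * (ENNReal.ofReal (ℓ ^ δ) * Nik))))
        = ENNReal.ofReal ℓ⁻¹ * ENNReal.ofReal (ℓ / 2)⁻¹ * ENNReal.ofReal (2 * ℓ) *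
            ENNReal.ofReal (ℓ ^ (1 - 1 / p)) * ENNReal.ofReal (ℓ ^ δ) * Nik := by ring
      _ = ENNReal.ofReal (ℓ⁻¹ * (ℓ / 2)⁻¹ * (2 * ℓ) * ℓ ^ (1 - 1 / p) * ℓ ^ δ) * Nik := by
          rw [← ENNReal.ofReal_mul (by positivity), ← ENNReal.ofReal_mul (by positivity),
            ← ENNReal.ofReal_mul (by positivity), ← ENNReal.ofReal_mul (by positivity)]
      _ = ENNReal.ofReal (4 * ℓ ^ (δ - 1 / p)) * Nik := by rw [hreal]
  calc (ENNReal.ofReal ℓ)⁻¹ * X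
      ≤ (ENNReal.ofReal ℓ)⁻¹ * ((A * ENNReal.ofReal ℓ + C) / ENNReal.ofReal (ℓ / 2)) :=
        mul_le_mul_right h5 _
    _ = (ENNReal.ofReal (ℓ / 2))⁻¹ * A * ((ENNReal.ofReal ℓ)⁻¹ * ENNReal.ofReal ℓ) +
          (ENNReal.ofReal ℓ)⁻¹ * ((ENNReal.ofReal (ℓ / 2))⁻¹ * C) := by
        rw [div_eq_mul_inv]; ring
    _ = (ENNReal.ofReal (ℓ / 2))⁻¹ * A + ENNReal.ofReal (4 * ℓ ^ (δ - 1 / p)) * Nik := by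
        rw [ENNReal.inv_mul_cancel hne hnt, mul_one, hconst]

end AuxProofC

section AuxProofD

variable {E : Type*} [PseudoEMetricSpace E]

private lemma chain_est (g : ℝ → E) (hg : Continuous g) {δ p s t : ℝ}
    (hδ : 0 < δ) (hp : 1 < p) (hα : 0 < δ - 1 / p) (hst : s < t) (x : ℝ) (lo : ℕ → ℝ)
    (hsub : ∀ n : ℕ, Set.Ioc (lo n) (lo n + (t - s) / 2 ^ n) ⊆ Set.Ioc s t)
    (hnest : ∀ n : ℕ, Set.Ioc (lo (n + 1)) (lo (n + 1) + (t - s) / 2 ^ (n + 1)) ⊆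
      Set.Ioc (lo n) (lo n + (t - s) / 2 ^ n))
    (hclose : ∀ n : ℕ, ∀ u ∈ Set.Ioc (lo n) (lo n + (t - s) / 2 ^ n),
      |u - x| ≤ (t - s) / 2 ^ n) :
    (ENNReal.ofReal (t - s))⁻¹ *
        ∫⁻ u in Set.Ioc (lo 0) (lo 0 + (t - s)), edist (g x) (g u) ≤
      ENNReal.ofReal (4 / (1 - 2 ^ (-(δ - 1 / p))) * (t - s) ^ (δ - 1 / p)) *
        nikNorm g δ p s t := by
  have hL : 0 < t - s := sub_pos.2 hst
  set ρ := (2 : ℝ) ^ (-(δ - 1 / p)) with hρ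
  have hρ0 : 0 < ρ := Real.rpow_pos_of_pos two_pos _
  have hρ1 : ρ < 1 := Real.rpow_lt_one_of_one_lt_of_neg one_lt_two (by linarith)
  set Nik := nikNorm g δ p s t with hNik
  set S := ENNReal.ofReal (4 / (1 - ρ) * (t - s) ^ (δ - 1 / p)) * Nik with hS
  set D : ℕ → ℝ≥0∞ := fun n => (ENNReal.ofReal ((t - s) / 2 ^ n))⁻¹ *
    ∫⁻ u in Set.Ioc (lo n) (lo n + (t - s) / 2 ^ n), edist (g x) (g u) with hD
  suffices hsuff : D 0 ≤ S by
    have e0 : D 0 = (ENNReal.ofReal (t - s))⁻¹ *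
        ∫⁻ u in Set.Ioc (lo 0) (lo 0 + (t - s)), edist (g x) (g u) := by
      simp only [hD, pow_zero, div_one]
    rw [← e0]
    exact hsuff
  -- one chaining step
  have step : ∀ n : ℕ, D n ≤ D (n + 1) +
      ENNReal.ofReal (4 * ((t - s) / 2 ^ n) ^ (δ - 1 / p)) * Nik := by
    intro n
    have hpos : 0 < (t - s) / 2 ^ n := by positivity
    have e2 : (t - s) / 2 ^ (n + 1) = (t - s) / 2 ^ n / 2 := by
      rw [pow_succ]; ring
    have hJ : Set.Ioc (lo (n + 1)) (lo (n + 1) + (t - s) / 2 ^ n / 2) ⊆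
        Set.Ioc (lo n) (lo n + (t - s) / 2 ^ n) := by
      rw [← e2]; exact hnest n
    have hstep := chain_step g hg hδ hp hpos (hsub n) hJ x
    simp only [hD]
    rw [e2]
    exact hstep
  -- telescoping
  have tele : ∀ N : ℕ, D 0 ≤ D N +
      ∑ n ∈ Finset.range N, ENNReal.ofReal (4 * ((t - s) / 2 ^ n) ^ (δ - 1 / p)) * Nik := by
    intro N
    induction N with
    | zero => simp
    | succ N ih =>
        refine ih.trans ?_
        rw [Finset.sum_range_succ]
        calc D N + ∑ n ∈ Finset.range N,
              ENNReal.ofReal (4 * ((t - s) / 2 ^ n) ^ (δ - 1 / p)) * Nik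
            ≤ (D (N + 1) + ENNReal.ofReal (4 * ((t - s) / 2 ^ N) ^ (δ - 1 / p)) * Nik) +
              ∑ n ∈ Finset.range N,
                ENNReal.ofReal (4 * ((t - s) / 2 ^ n) ^ (δ - 1 / p)) * Nik :=
            add_le_add_left (step N) _
          _ = D (N + 1) + (∑ n ∈ Finset.range N,
                ENNReal.ofReal (4 * ((t - s) / 2 ^ n) ^ (δ - 1 / p)) * Nik +
                  ENNReal.ofReal (4 * ((t - s) / 2 ^ N) ^ (δ - 1 / p)) * Nik) := by ring
  -- geometric sum bound
  have hterm : ∀ n : ℕ, ((t - s) / 2 ^ n) ^ (δ - 1 / p) =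
      (t - s) ^ (δ - 1 / p) * ρ ^ n := by
    intro n
    have h2n : (0 : ℝ) < 2 ^ n := by positivity
    calc ((t - s) / 2 ^ n) ^ (δ - 1 / p)
        = (t - s) ^ (δ - 1 / p) / ((2 : ℝ) ^ n) ^ (δ - 1 / p) :=
          Real.div_rpow hL.le h2n.le _
      _ = (t - s) ^ (δ - 1 / p) / (2 : ℝ) ^ ((n : ℝ) * (δ - 1 / p)) := by
          rw [← Real.rpow_natCast 2 n, ← Real.rpow_mul (by norm_num)]
      _ = (t - s) ^ (δ - 1 / p) * (2 : ℝ) ^ (-((n : ℝ) * (δ - 1 / p))) := by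
          rw [div_eq_mul_inv, Real.rpow_neg (by norm_num)]
      _ = (t - s) ^ (δ - 1 / p) * ρ ^ n := by
          rw [hρ, ← Real.rpow_natCast ((2 : ℝ) ^ (-(δ - 1 / p))) n,
            ← Real.rpow_mul (by norm_num)]
          congr 1
          ring
  have hgeom : ∀ N : ℕ, ∑ n ∈ Finset.range N, ρ ^ n ≤ 1 / (1 - ρ) := by
    intro N
    rw [geom_sum_eq (ne_of_lt hρ1) N]
    have e3 : (ρ ^ N - 1) / (ρ - 1) = (1 - ρ ^ N) / (1 - ρ) := by
      rw [← neg_div_neg_eq]; ring_nf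
    rw [e3]
    have h1 : 1 - ρ ^ N ≤ 1 := by
      have := pow_nonneg hρ0.le N
      linarith
    have h2 : 0 < 1 - ρ := by linarith
    gcongr
  have sumb : ∀ N : ℕ, ∑ n ∈ Finset.range N,
      ENNReal.ofReal (4 * ((t - s) / 2 ^ n) ^ (δ - 1 / p)) * Nik ≤ S := by
    intro N
    have hrsum : ∑ n ∈ Finset.range N, 4 * ((t - s) / 2 ^ n) ^ (δ - 1 / p) ≤
        4 / (1 - ρ) * (t - s) ^ (δ - 1 / p) := by
      have : ∑ n ∈ Finset.range N, 4 * ((t - s) / 2 ^ n) ^ (δ - 1 / p) =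
          4 * (t - s) ^ (δ - 1 / p) * ∑ n ∈ Finset.range N, ρ ^ n := by
        rw [Finset.mul_sum]
        refine Finset.sum_congr rfl fun n _ => ?_
        rw [hterm n]; ring
      rw [this]
      have h4 : (0 : ℝ) ≤ 4 * (t - s) ^ (δ - 1 / p) := by positivity
      calc 4 * (t - s) ^ (δ - 1 / p) * ∑ n ∈ Finset.range N, ρ ^ n
          ≤ 4 * (t - s) ^ (δ - 1 / p) * (1 / (1 - ρ)) :=
            mul_le_mul_of_nonneg_left (hgeom N) h4
        _ = 4 / (1 - ρ) * (t - s) ^ (δ - 1 / p) := by ring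
    calc ∑ n ∈ Finset.range N, ENNReal.ofReal (4 * ((t - s) / 2 ^ n) ^ (δ - 1 / p)) * Nik
        = (∑ n ∈ Finset.range N, ENNReal.ofReal (4 * ((t - s) / 2 ^ n) ^ (δ - 1 / p))) *
            Nik := by rw [Finset.sum_mul]
      _ = ENNReal.ofReal (∑ n ∈ Finset.range N, 4 * ((t - s) / 2 ^ n) ^ (δ - 1 / p)) *
            Nik := by rw [ENNReal.ofReal_sum_of_nonneg fun i _ => by positivity]
      _ ≤ S := by
          rw [hS]
          exact mul_le_mul_left (ENNReal.ofReal_le_ofReal hrsum) _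
  -- the limit argument
  refine ENNReal.le_of_forall_pos_le_add fun ε hε _ => ?_
  obtain ⟨η, hη, hcont⟩ : ∃ η > 0, ∀ ⦃u : ℝ⦄, dist u x < η →
      edist (g u) (g x) < (ε : ℝ≥0∞) := by
    have h1 : Filter.Tendsto g (nhds x) (nhds (g x)) := hg.continuousAt
    have h2 := EMetric.tendsto_nhds.1 h1 (ε : ℝ≥0∞)
      (by exact_mod_cast hε)
    exact Metric.eventually_nhds_iff.1 h2
  obtain ⟨N, hN⟩ : ∃ N : ℕ, (t - s) / 2 ^ N < η := by
    obtain ⟨N, hN⟩ := exists_pow_lt_of_lt_one (div_pos hη hL) (by norm_num : (1 : ℝ) / 2 < 1)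
    refine ⟨N, ?_⟩
    have h12 : ((1 : ℝ) / 2) ^ N = 1 / 2 ^ N := by
      rw [div_pow, one_pow]
    rw [h12, div_lt_div_iff₀ (by positivity) hL] at hN
    rw [div_lt_iff₀ (by positivity : (0:ℝ) < 2 ^ N)]
    linarith
  have hDN : D N ≤ (ε : ℝ≥0∞) := by
    have hne : ENNReal.ofReal ((t - s) / 2 ^ N) ≠ 0 := by
      simp only [ne_eq, ENNReal.ofReal_eq_zero, not_le]
      positivity
    have hnt : ENNReal.ofReal ((t - s) / 2 ^ N) ≠ ⊤ := ENNReal.ofReal_ne_top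
    have hb : ∀ u ∈ Set.Ioc (lo N) (lo N + (t - s) / 2 ^ N),
        edist (g x) (g u) ≤ (ε : ℝ≥0∞) := by
      intro u hu
      have hcl := hclose N u hu
      have hd : dist u x < η := by
        rw [Real.dist_eq]
        exact lt_of_le_of_lt hcl hN
      rw [edist_comm]
      exact le_of_lt (hcont hd)
    calc D N ≤ (ENNReal.ofReal ((t - s) / 2 ^ N))⁻¹ *
          ∫⁻ _ in Set.Ioc (lo N) (lo N + (t - s) / 2 ^ N), (ε : ℝ≥0∞) := by
          simp only [hD]
          exact mul_le_mul_right (setLIntegral_mono' measurableSet_Ioc hb) _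
      _ = (ENNReal.ofReal ((t - s) / 2 ^ N))⁻¹ *
            ((ε : ℝ≥0∞) * ENNReal.ofReal ((t - s) / 2 ^ N)) := by
          rw [setLIntegral_const, Real.volume_Ioc]
          congr 2
          ring
      _ = (ε : ℝ≥0∞) := by
          rw [show (ENNReal.ofReal ((t - s) / 2 ^ N))⁻¹ *
              ((ε : ℝ≥0∞) * ENNReal.ofReal ((t - s) / 2 ^ N)) =
              (ε : ℝ≥0∞) * ((ENNReal.ofReal ((t - s) / 2 ^ N))⁻¹ *
                ENNReal.ofReal ((t - s) / 2 ^ N)) from by ring,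
            ENNReal.inv_mul_cancel hne hnt, mul_one]
  calc D 0 ≤ D N + ∑ n ∈ Finset.range N,
        ENNReal.ofReal (4 * ((t - s) / 2 ^ n) ^ (δ - 1 / p)) * Nik := tele N
    _ ≤ (ε : ℝ≥0∞) + S := add_le_add hDN (sumb N)
    _ = S + (ε : ℝ≥0∞) := add_comm _ _

end AuxProofD

section AuxProofE

variable {E : Type*} [PseudoEMetricSpace E]

private lemma main_cont (g : ℝ → E) (hg : Continuous g) {δ p s t : ℝ}
    (hδ : 0 < δ) (hp : 1 < p) (hα : 0 < δ - 1 / p) (hst : s < t) :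
    edist (g s) (g t) ≤ ENNReal.ofReal (8 / (1 - 2 ^ (-(δ - 1 / p)))) * nikNorm g δ p s t *
      ENNReal.ofReal (t - s) ^ (δ - 1 / p) := by
  have hL : 0 < t - s := sub_pos.2 hst
  have hone : ∀ n : ℕ, (1 : ℝ) ≤ 2 ^ n := fun n => one_le_pow₀ (by norm_num)
  have hℓle : ∀ n : ℕ, (t - s) / 2 ^ n ≤ t - s := fun n => div_le_self hL.le (hone n)
  have hℓpos : ∀ n : ℕ, 0 < (t - s) / 2 ^ n := fun n => by positivity
  have hmono : ∀ n : ℕ, (t - s) / 2 ^ (n + 1) ≤ (t - s) / 2 ^ n := by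
    intro n
    gcongr <;> first | exact hL.le | norm_num
  set ρ := (2 : ℝ) ^ (-(δ - 1 / p)) with hρ
  have hρ1 : ρ < 1 := Real.rpow_lt_one_of_one_lt_of_neg one_lt_two (by linarith)
  set Nik := nikNorm g δ p s t with hNik
  -- left chain (base point s)
  have hsub1 : ∀ n : ℕ, Set.Ioc s (s + (t - s) / 2 ^ n) ⊆ Set.Ioc s t := by
    intro n u hu
    exact ⟨hu.1, by linarith [hu.2, hℓle n]⟩
  have hnest1 : ∀ n : ℕ, Set.Ioc s (s + (t - s) / 2 ^ (n + 1)) ⊆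
      Set.Ioc s (s + (t - s) / 2 ^ n) := by
    intro n u hu
    exact ⟨hu.1, by linarith [hu.2, hmono n]⟩
  have hclose1 : ∀ n : ℕ, ∀ u ∈ Set.Ioc s (s + (t - s) / 2 ^ n),
      |u - s| ≤ (t - s) / 2 ^ n := by
    intro n u hu
    rw [abs_of_nonneg (by linarith [hu.1] : (0:ℝ) ≤ u - s)]
    linarith [hu.2]
  have h1 : (ENNReal.ofReal (t - s))⁻¹ *
      ∫⁻ u in Set.Ioc s (s + (t - s)), edist (g s) (g u) ≤
      ENNReal.ofReal (4 / (1 - ρ) * (t - s) ^ (δ - 1 / p)) * Nik :=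
    chain_est g hg hδ hp hα hst s (fun _ => s) hsub1 hnest1 hclose1
  rw [show s + (t - s) = t from by ring] at h1
  -- right chain (base point t)
  have hsub2 : ∀ n : ℕ, Set.Ioc (t - (t - s) / 2 ^ n) (t - (t - s) / 2 ^ n + (t - s) / 2 ^ n) ⊆
      Set.Ioc s t := by
    intro n u hu
    exact ⟨by linarith [hu.1, hℓle n], by linarith [hu.2]⟩
  have hnest2 : ∀ n : ℕ, Set.Ioc (t - (t - s) / 2 ^ (n + 1))
      (t - (t - s) / 2 ^ (n + 1) + (t - s) / 2 ^ (n + 1)) ⊆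
      Set.Ioc (t - (t - s) / 2 ^ n) (t - (t - s) / 2 ^ n + (t - s) / 2 ^ n) := by
    intro n u hu
    exact ⟨by linarith [hu.1, hmono n], by linarith [hu.2]⟩
  have hclose2 : ∀ n : ℕ, ∀ u ∈ Set.Ioc (t - (t - s) / 2 ^ n)
      (t - (t - s) / 2 ^ n + (t - s) / 2 ^ n), |u - t| ≤ (t - s) / 2 ^ n := by
    intro n u hu
    rw [abs_of_nonpos (by linarith [hu.2] : u - t ≤ 0)]
    linarith [hu.1]
  have h2 : (ENNReal.ofReal (t - s))⁻¹ *
      ∫⁻ u in Set.Ioc (t - (t - s) / 2 ^ (0:ℕ)) (t - (t - s) / 2 ^ (0:ℕ) + (t - s)),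
        edist (g t) (g u) ≤
      ENNReal.ofReal (4 / (1 - ρ) * (t - s) ^ (δ - 1 / p)) * Nik :=
    chain_est g hg hδ hp hα hst t (fun n => t - (t - s) / 2 ^ n) hsub2 hnest2 hclose2
  rw [show t - (t - s) / 2 ^ (0:ℕ) = s from by norm_num,
    show s + (t - s) = t from by ring] at h2
  -- triangle inequality averaged over Ioc s t
  have hne : ENNReal.ofReal (t - s) ≠ 0 := by
    simp only [ne_eq, ENNReal.ofReal_eq_zero, not_le]
    linarith
  have hnt : ENNReal.ofReal (t - s) ≠ ⊤ := ENNReal.ofReal_ne_top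
  have hvol : volume (Set.Ioc s t) = ENNReal.ofReal (t - s) := Real.volume_Ioc
  have htri : edist (g s) (g t) * ENNReal.ofReal (t - s) ≤
      (∫⁻ u in Set.Ioc s t, edist (g s) (g u)) +
        ∫⁻ u in Set.Ioc s t, edist (g t) (g u) := by
    calc edist (g s) (g t) * ENNReal.ofReal (t - s)
        = ∫⁻ _ in Set.Ioc s t, edist (g s) (g t) := by rw [setLIntegral_const, hvol]
      _ ≤ ∫⁻ u in Set.Ioc s t, (edist (g s) (g u) + edist (g u) (g t)) :=
          lintegral_mono fun u => edist_triangle _ _ _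
      _ = (∫⁻ u in Set.Ioc s t, edist (g s) (g u)) +
            ∫⁻ u in Set.Ioc s t, edist (g u) (g t) := by
          rw [lintegral_add_left (continuous_const.edist hg).measurable]
      _ = (∫⁻ u in Set.Ioc s t, edist (g s) (g u)) +
            ∫⁻ u in Set.Ioc s t, edist (g t) (g u) := by
          congr 1
          exact lintegral_congr fun u => edist_comm _ _
  have hmain : edist (g s) (g t) ≤
      ENNReal.ofReal (4 / (1 - ρ) * (t - s) ^ (δ - 1 / p)) * Nik +
        ENNReal.ofReal (4 / (1 - ρ) * (t - s) ^ (δ - 1 / p)) * Nik := by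
    have hdiv : edist (g s) (g t) ≤
        ((∫⁻ u in Set.Ioc s t, edist (g s) (g u)) +
          ∫⁻ u in Set.Ioc s t, edist (g t) (g u)) / ENNReal.ofReal (t - s) :=
      (ENNReal.le_div_iff_mul_le (Or.inl hne) (Or.inl hnt)).2 htri
    calc edist (g s) (g t)
        ≤ ((∫⁻ u in Set.Ioc s t, edist (g s) (g u)) +
            ∫⁻ u in Set.Ioc s t, edist (g t) (g u)) / ENNReal.ofReal (t - s) := hdiv
      _ = (ENNReal.ofReal (t - s))⁻¹ * (∫⁻ u in Set.Ioc s t, edist (g s) (g u)) +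
            (ENNReal.ofReal (t - s))⁻¹ * ∫⁻ u in Set.Ioc s t, edist (g t) (g u) := by
          rw [div_eq_mul_inv]; ring
      _ ≤ _ := add_le_add h1 h2
  have hfin : ENNReal.ofReal (4 / (1 - ρ) * (t - s) ^ (δ - 1 / p)) * Nik +
      ENNReal.ofReal (4 / (1 - ρ) * (t - s) ^ (δ - 1 / p)) * Nik =
      ENNReal.ofReal (8 / (1 - ρ)) * Nik * ENNReal.ofReal (t - s) ^ (δ - 1 / p) := by
    have hρpos : (0:ℝ) < 1 - ρ := by linarith
    have h8 : (0:ℝ) ≤ 8 / (1 - ρ) := by positivity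
    have h4 : (0:ℝ) ≤ 4 / (1 - ρ) * (t - s) ^ (δ - 1 / p) := by positivity
    rw [← add_mul, ← ENNReal.ofReal_add h4 h4,
      show 4 / (1 - ρ) * (t - s) ^ (δ - 1 / p) + 4 / (1 - ρ) * (t - s) ^ (δ - 1 / p) =
        8 / (1 - ρ) * (t - s) ^ (δ - 1 / p) from by ring,
      ENNReal.ofReal_mul h8, ENNReal.ofReal_rpow_of_pos hL]
    ring
  exact hmain.trans_eq hfin

end AuxProofE

/-- Nikolskii regular functions are `(δ-1/p)`-Hölder continuous. -/
theorem edist_le_nikNorm {E : Type*} [PseudoEMetricSpace E] (δ p : ℝ)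
    (hδ : 0 < δ) (hδ1 : δ < 1) (hp : 1 < p) (hδp : 0 < δ - 1 / p) :
    ∃ C : ℝ, 0 < C ∧ ∀ (T : ℝ) (f : ℝ → E), 0 < T →
      ContinuousOn f (Set.Icc 0 T) → nikNorm f δ p 0 T ≠ ⊤ →
      ∀ s t, 0 ≤ s → s ≤ t → t ≤ T →
        edist (f s) (f t) ≤
          ENNReal.ofReal C * nikNorm f δ p s t * ENNReal.ofReal (t - s) ^ (δ - 1 / p) := by
  have hρ1 : (2 : ℝ) ^ (-(δ - 1 / p)) < 1 :=
    Real.rpow_lt_one_of_one_lt_of_neg one_lt_two (by linarith)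
  have hρ0 : (0 : ℝ) < (2 : ℝ) ^ (-(δ - 1 / p)) := Real.rpow_pos_of_pos two_pos _
  refine ⟨8 / (1 - 2 ^ (-(δ - 1 / p))), div_pos (by norm_num) (by linarith), ?_⟩
  intro T f hT hcont hnik s t hs hst' ht
  rcases eq_or_lt_of_le hst' with rfl | hst
  · rw [edist_self]
    exact zero_le
  · have h0T : (0 : ℝ) ≤ T := le_of_lt hT
    set g : ℝ → E := fun u => f ((Set.projIcc 0 T h0T u : Set.Icc (0:ℝ) T) : ℝ) with hgdef
    have hgc : Continuous g :=
      hcont.comp_continuous (continuous_subtype_val.comp continuous_projIcc)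
        (fun u => (Set.projIcc 0 T h0T u).2)
    have hge : ∀ u, u ∈ Set.Icc (0:ℝ) T → g u = f u := by
      intro u hu
      simp only [hgdef]
      rw [Set.projIcc_of_mem h0T hu]
    have hnikeq : nikNorm g δ p s t = nikNorm f δ p s t := by
      unfold nikNorm
      refine iSup_congr fun h => iSup_congr fun hh => ?_
      congr 1
      congr 1
      refine setLIntegral_congr_fun measurableSet_Ioc
        (fun r hr => ?_)
      have h1 : g r = f r := hge r ⟨by linarith [hr.1], by linarith [hr.2, hh.1]⟩
      have h2 : g (r + h) = f (r + h) :=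
        hge _ ⟨by linarith [hr.1, hh.1], by linarith [hr.2]⟩
      rw [h1, h2]
    have hedisteq : edist (f s) (f t) = edist (g s) (g t) := by
      rw [hge s ⟨hs, by linarith⟩, hge t ⟨by linarith, ht⟩]
    rw [hedisteq, ← hnikeq]
    exact main_cont g hgc hδ hp hδp hst
end

section
/- Let (E,d) be a metric space, T > 0, δ ∈ (0,1), p ∈ (1,∞) with δ > 1/p, and ε ∈ (0,1-δ). Then one has the inclusions W^{δ,p}([0,T];E) ⊆ V^{δ,p}([0,T];E) ⊆ N^{δ,p}([0,T];E) and N^{δ+ε,p}([0,T];E) ⊆ \hat N^{δ,p}([0,T];E) ⊆ N^{δ,p}([0,T];E). -/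
open scoped ENNReal NNReal
open MeasureTheory

section Part
open Set
variable {E : Type*} [PseudoEMetricSpace E]

/-- The Riesz variation without the outer power. -/
noncomputable def VSup (f : ℝ → E) (δ p s t : ℝ) : ℝ≥0∞ :=
  ⨆ n, ⨆ u, ⨆ _ : IsPart s t n u, rieszSum f δ p n u

lemma VNorm_eq_VSup (f : ℝ → E) (δ p s t : ℝ) :
    VNorm f δ p s t = VSup f δ p s t ^ (1/p) := rfl

lemma IsPart.mono {s t : ℝ} {n : ℕ} {u : ℕ → ℝ} (h : IsPart s t n u) :
    ∀ {i j}, i ≤ j → j ≤ n → u i ≤ u j := by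
  intro i j
  induction j with
  | zero =>
    intro hij _
    have : i = 0 := by omega
    subst this; exact le_rfl
  | succ k ih =>
    intro hij hjn
    rcases Nat.eq_or_lt_of_le hij with rfl | hlt
    · exact le_rfl
    · exact le_trans (ih (by omega) (by omega)) (h.2.2 k (by omega)).le

lemma IsPart.mem {s t : ℝ} {n : ℕ} {u : ℕ → ℝ} (h : IsPart s t n u) {i : ℕ} (hi : i ≤ n) :
    s ≤ u i ∧ u i ≤ t := by
  constructor
  · rw [← h.1]; exact h.mono (Nat.zero_le i) hi
  · rw [← h.2.1]; exact h.mono hi le_rfl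

lemma IsPart.le' {s t : ℝ} {n : ℕ} {u : ℕ → ℝ} (h : IsPart s t n u) : s ≤ t := by
  rw [← h.1, ← h.2.1]; exact h.mono (Nat.zero_le n) le_rfl

lemma exists_isPart {s t : ℝ} (h : s ≤ t) : ∃ n u, IsPart s t n u := by
  rcases eq_or_lt_of_le h with rfl | hlt
  · exact ⟨0, fun _ => s, rfl, rfl, by omega⟩
  · exact ⟨1, fun i => if i = 0 then s else t, by simp, by simp, by
      intro i hi; interval_cases i; simpa using hlt⟩

lemma rieszSum_le_VSup (f : ℝ → E) (δ p : ℝ) {s t : ℝ} {n : ℕ} {u : ℕ → ℝ}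
    (h : IsPart s t n u) : rieszSum f δ p n u ≤ VSup f δ p s t :=
  le_iSup_of_le n (le_iSup_of_le u (le_iSup_of_le h le_rfl))

section Concat
variable {α β γ : ℝ} {n1 n2 : ℕ} {u1 u2 : ℕ → ℝ}

lemma concat_key (h1 : IsPart α β n1 u1) (h2 : IsPart β γ n2 u2) {j : ℕ} (hj : j ≤ n1) :
    (if j < n1 then u1 j else u2 (j - n1)) = u1 j := by
  rcases lt_or_eq_of_le hj with hj' | rfl
  · rw [if_pos hj']
  · rw [if_neg (lt_irrefl _), Nat.sub_self, h2.1, h1.2.1]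

lemma isPart_concat (h1 : IsPart α β n1 u1) (h2 : IsPart β γ n2 u2) :
    IsPart α γ (n1 + n2) (fun i => if i < n1 then u1 i else u2 (i - n1)) := by
  refine ⟨?_, ?_, ?_⟩
  · show (if 0 < n1 then u1 0 else u2 (0 - n1)) = α
    rw [concat_key h1 h2 (Nat.zero_le n1), h1.1]
  · show (if n1 + n2 < n1 then _ else u2 (n1 + n2 - n1)) = γ
    rw [if_neg (by omega)]
    have : n1 + n2 - n1 = n2 := by omega
    rw [this, h2.2.1]
  · intro i hi
    by_cases hi2 : i < n1
    · show (if i < n1 then u1 i else _) < (if i + 1 < n1 then u1 (i+1) else _)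
      rw [if_pos hi2, concat_key h1 h2 (by omega : i + 1 ≤ n1)]
      exact h1.2.2 i hi2
    · show (if i < n1 then u1 i else u2 (i - n1)) < (if i + 1 < n1 then _ else u2 (i + 1 - n1))
      rw [if_neg hi2, if_neg (by omega)]
      have : i + 1 - n1 = (i - n1) + 1 := by omega
      rw [this]
      exact h2.2.2 (i - n1) (by omega)

lemma rieszSum_concat (f : ℝ → E) (δ p : ℝ)
    (h1 : IsPart α β n1 u1) (h2 : IsPart β γ n2 u2) :
    rieszSum f δ p (n1 + n2) (fun i => if i < n1 then u1 i else u2 (i - n1)) =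
      rieszSum f δ p n1 u1 + rieszSum f δ p n2 u2 := by
  unfold rieszSum
  rw [Finset.sum_range_add]
  congr 1
  · apply Finset.sum_congr rfl
    intro i hi
    simp only [Finset.mem_range] at hi
    beta_reduce
    rw [show (if i < n1 then u1 i else u2 (i - n1)) = u1 i from concat_key h1 h2 hi.le,
      show (if i + 1 < n1 then u1 (i+1) else u2 (i + 1 - n1)) = u1 (i+1) from
        concat_key h1 h2 (by omega)]
  · apply Finset.sum_congr rfl
    intro i hi
    beta_reduce
    rw [if_neg (by omega : ¬ (n1 + i < n1)), if_neg (by omega : ¬ (n1 + i + 1 < n1)),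
      show n1 + i - n1 = i by omega, show n1 + i + 1 - n1 = i + 1 by omega]

end Concat

lemma VSup_superadd (f : ℝ → E) (δ p : ℝ) {α β γ : ℝ} (h1 : α ≤ β) (h2 : β ≤ γ) :
    VSup f δ p α β + VSup f δ p β γ ≤ VSup f δ p α γ := by
  have hne1 : Nonempty (Σ' n u, IsPart α β n u) := by
    obtain ⟨n, u, h⟩ := exists_isPart h1; exact ⟨⟨n, u, h⟩⟩
  have hne2 : Nonempty (Σ' n u, IsPart β γ n u) := by
    obtain ⟨n, u, h⟩ := exists_isPart h2; exact ⟨⟨n, u, h⟩⟩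
  have e : ∀ (s t : ℝ), VSup f δ p s t = ⨆ q : Σ' n u, IsPart s t n u,
      rieszSum f δ p q.1 q.2.1 := by
    intro s t
    apply le_antisymm
    · refine iSup_le fun n => iSup_le fun u => iSup_le fun h => ?_
      exact le_iSup_of_le ⟨n, u, h⟩ le_rfl
    · exact iSup_le fun q => rieszSum_le_VSup f δ p q.2.2
  rw [e α β, e β γ]
  apply ENNReal.iSup_add_iSup_le
  intro i j
  rw [← rieszSum_concat f δ p i.2.2 j.2.2]
  exact rieszSum_le_VSup f δ p (isPart_concat i.2.2 j.2.2)

lemma sum_VSup_le (f : ℝ → E) (δ p : ℝ) {c : ℕ → ℝ} (hc : ∀ j, c j ≤ c (j + 1)) (m : ℕ) :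
    ∑ j ∈ Finset.range m, VSup f δ p (c j) (c (j + 1)) ≤ VSup f δ p (c 0) (c m) := by
  have hmono : Monotone c := monotone_nat_of_le_succ hc
  induction m with
  | zero => simp
  | succ m ih =>
    rw [Finset.sum_range_succ]
    exact le_trans (add_le_add_left ih _)
      (VSup_superadd f δ p (hmono (Nat.zero_le m)) (hc m))

lemma VSup_mono_interval (f : ℝ → E) (δ p : ℝ) {s s' t' t : ℝ}
    (h1 : s ≤ s') (h2 : s' ≤ t') (h3 : t' ≤ t) :
    VSup f δ p s' t' ≤ VSup f δ p s t := by
  calc VSup f δ p s' t' ≤ VSup f δ p s s' + VSup f δ p s' t' := le_add_self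
    _ ≤ VSup f δ p s t' := VSup_superadd f δ p h1 h2
    _ ≤ VSup f δ p s t' + VSup f δ p t' t := le_self_add
    _ ≤ VSup f δ p s t := VSup_superadd f δ p (h1.trans h2) h3

lemma edist_pow_le_VSup (f : ℝ → E) (δ p : ℝ) {s t : ℝ} (h : s < t) :
    edist (f s) (f t) ^ p / ENNReal.ofReal (t - s) ^ (δ * p - 1) ≤ VSup f δ p s t := by
  have hP : IsPart s t 1 (fun i => if i = 0 then s else t) := by
    refine ⟨by simp, by simp, fun i hi => ?_⟩
    interval_cases i; simpa using h
  have := rieszSum_le_VSup f δ p hP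
  rwa [rieszSum, Finset.sum_range_one] at this

end Part
section MeasureHelp
open Set MeasureTheory

lemma iUnion_Ioc_part {c : ℕ → ℝ} (hc : ∀ j, c j ≤ c (j + 1)) (m : ℕ) :
    Ioc (c 0) (c m) ⊆ ⋃ j ∈ Finset.range m, Ioc (c j) (c (j + 1)) := by
  induction m with
  | zero => simp
  | succ m ih =>
    intro x hx
    rcases le_or_gt x (c m) with hxm | hxm
    · have : x ∈ Ioc (c 0) (c m) := ⟨hx.1, hxm⟩
      have := ih this
      simp only [mem_iUnion, Finset.mem_range] at this ⊢
      obtain ⟨j, hj, hmem⟩ := this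
      exact ⟨j, by omega, hmem⟩
    · simp only [mem_iUnion, Finset.mem_range]
      exact ⟨m, by omega, hxm, hx.2⟩

/-- Splitting bound: integral over a set covered by consecutive intervals. -/
lemma lintegral_le_sum_parts (F : ℝ → ℝ≥0∞) {A : Set ℝ} (hA : MeasurableSet A)
    {c : ℕ → ℝ} (hc : ∀ j, c j ≤ c (j + 1)) {m : ℕ} (hsub : A ⊆ Ioc (c 0) (c m)) :
    ∫⁻ x in A, F x ≤
      ∑ j ∈ Finset.range m, ∫⁻ x in Ioc (c j) (c (j + 1)) ∩ A, F x := by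
  have hμ : volume.restrict A ≤
      ∑ j ∈ Finset.range m, volume.restrict (Ioc (c j) (c (j + 1)) ∩ A) := by
    rw [Measure.le_iff]
    intro s hs
    rw [Measure.restrict_apply hs, Measure.finset_sum_apply]
    have hcov : s ∩ A ⊆ ⋃ j ∈ Finset.range m, (s ∩ (Ioc (c j) (c (j + 1)) ∩ A)) := by
      intro x hx
      have := iUnion_Ioc_part hc m (hsub hx.2)
      simp only [mem_iUnion, Finset.mem_range] at this ⊢
      obtain ⟨j, hj, hmem⟩ := this
      exact ⟨j, hj, hx.1, hmem, hx.2⟩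
    calc volume (s ∩ A) ≤ volume (⋃ j ∈ Finset.range m, (s ∩ (Ioc (c j) (c (j + 1)) ∩ A))) :=
          measure_mono hcov
      _ ≤ ∑ j ∈ Finset.range m, volume (s ∩ (Ioc (c j) (c (j + 1)) ∩ A)) :=
          measure_biUnion_finset_le _ _
      _ = ∑ j ∈ Finset.range m, volume.restrict (Ioc (c j) (c (j + 1)) ∩ A) s := by
          refine Finset.sum_congr rfl fun j _ => ?_
          rw [Measure.restrict_apply hs]
  calc ∫⁻ x in A, F x
      ≤ ∫⁻ x, F x ∂(∑ j ∈ Finset.range m, volume.restrict (Ioc (c j) (c (j + 1)) ∩ A)) :=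
        lintegral_mono' hμ le_rfl
    _ = ∑ j ∈ Finset.range m, ∫⁻ x in Ioc (c j) (c (j + 1)) ∩ A, F x :=
        lintegral_finset_sum_measure _ _ _

/-- Superadditivity-type bound: sum of integrals over consecutive intervals. -/
lemma sum_parts_le_lintegral (F : ℝ → ℝ≥0∞) {c : ℕ → ℝ} (hc : ∀ j, c j ≤ c (j + 1)) (m : ℕ) :
    ∑ j ∈ Finset.range m, ∫⁻ x in Ioc (c j) (c (j + 1)), F x ≤ ∫⁻ x in Ioc (c 0) (c m), F x := by
  have hmono : Monotone c := monotone_nat_of_le_succ hc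
  induction m with
  | zero => simp
  | succ m ih =>
    rw [Finset.sum_range_succ]
    have hdisj : Disjoint (Ioc (c 0) (c m)) (Ioc (c m) (c (m + 1))) := by
      rw [Set.disjoint_left]
      rintro x ⟨_, h2⟩ ⟨h3, _⟩
      exact absurd h2 (not_le.mpr h3)
    have hunion : Ioc (c 0) (c m) ∪ Ioc (c m) (c (m + 1)) = Ioc (c 0) (c (m + 1)) :=
      Set.Ioc_union_Ioc_eq_Ioc (hmono (Nat.zero_le m)) (hc m)
    calc _ ≤ (∫⁻ x in Ioc (c 0) (c m), F x) + ∫⁻ x in Ioc (c m) (c (m + 1)), F x :=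
          add_le_add_left ih _
      _ = ∫⁻ x in Ioc (c 0) (c (m + 1)), F x := by
          rw [← hunion, Measure.restrict_union hdisj measurableSet_Ioc, lintegral_add_measure]

lemma sum_even_odd_le {v : ℕ → ℝ≥0∞} (m : ℕ) :
    ∑ j ∈ Finset.range m, v j ≤
      (∑ k ∈ Finset.range m, v (2 * k)) + ∑ k ∈ Finset.range m, v (2 * k + 1) := by
  have h2 : ∀ m, ∑ j ∈ Finset.range (2 * m), v j
      = (∑ k ∈ Finset.range m, v (2 * k)) + ∑ k ∈ Finset.range m, v (2 * k + 1) := by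
    intro m
    induction m with
    | zero => simp
    | succ m ih =>
      have : 2 * (m + 1) = (2 * m) + 1 + 1 := by ring
      rw [this, Finset.sum_range_succ, Finset.sum_range_succ, ih,
        Finset.sum_range_succ, Finset.sum_range_succ]
      ring
  calc ∑ j ∈ Finset.range m, v j ≤ ∑ j ∈ Finset.range (2 * m), v j :=
        Finset.sum_le_sum_of_subset (by simp [Finset.range_subset]; omega)
    _ = _ := h2 m

end MeasureHelp

section NikCore
open Set MeasureTheory
variable {E : Type*} [PseudoEMetricSpace E]

lemma ofReal_rpow_ne_zero {x : ℝ} (hx : 0 < x) (y : ℝ) : ENNReal.ofReal x ^ y ≠ 0 := by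
  refine (ENNReal.rpow_pos ?_ ?_).ne'
  · exact ENNReal.ofReal_pos.mpr hx
  · exact ENNReal.ofReal_ne_top

lemma ofReal_rpow_ne_top {x : ℝ} (hx : 0 < x) (y : ℝ) : ENNReal.ofReal x ^ y ≠ ⊤ := by
  intro h
  rw [ENNReal.rpow_eq_top_iff] at h
  rcases h with ⟨h1, _⟩ | ⟨h1, _⟩
  · exact absurd h1 (ENNReal.ofReal_pos.mpr hx).ne'
  · exact absurd h1 ENNReal.ofReal_ne_top

/-- Core estimate: the Nikolskii integrand is controlled by the Riesz variation. -/
lemma nik_core (f : ℝ → E) {β p a b h : ℝ} (hp0 : 0 < p) (hab : a < b)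
    (hh0 : 0 < h) (hhb : h ≤ b - a) :
    ENNReal.ofReal h ^ (-(β * p)) * ∫⁻ r in Ioc a (b - h), edist (f r) (f (r + h)) ^ p ≤
      2 * VSup f β p a b := by
  classical
  set m := ⌈(b - a) / h⌉₊ with hm
  set c : ℕ → ℝ := fun j => min (a + j * h) b with hcdef
  have hcj : ∀ j, c j ≤ c (j + 1) := by
    intro j
    apply min_le_min _ le_rfl
    have : (j : ℝ) ≤ (j : ℝ) + 1 := by linarith
    push_cast
    nlinarith
  have hc0 : c 0 = a := by simp [hcdef]; linarith
  have hcb : ∀ j, m ≤ j → c j = b := by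
    intro j hj
    have h1 : (b - a) / h ≤ m := Nat.le_ceil _
    have h2 : (m : ℝ) ≤ j := by exact_mod_cast hj
    have : b - a ≤ j * h := by
      rw [div_le_iff₀ hh0] at h1
      nlinarith
    simp [hcdef]
    linarith
  have hmono : Monotone c := monotone_nat_of_le_succ hcj
  -- pointwise bound on each cell
  have hcell : ∀ j, ∀ r ∈ Ioc (c j) (c (j + 1)) ∩ Ioc a (b - h),
      edist (f r) (f (r + h)) ^ p ≤
        ENNReal.ofReal h ^ (β * p - 1) * VSup f β p (c j) (c (j + 2)) := by
    intro j r hr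
    obtain ⟨⟨hr1, hr2⟩, _, hr4⟩ := hr
    have hrh : r < r + h := by linarith
    have key := edist_pow_le_VSup f β p hrh
    have hsub : VSup f β p r (r + h) ≤ VSup f β p (c j) (c (j + 2)) := by
      apply VSup_mono_interval f β p hr1.le (by linarith)
      -- r + h ≤ c (j + 2)
      have h1 : r + h ≤ b := by linarith
      have h2 : r + h ≤ a + (j + 2 : ℕ) * h := by
        have : c (j + 1) ≤ a + (j + 1 : ℕ) * h := min_le_left _ _
        push_cast at this ⊢
        nlinarith [hr2.trans this]
      exact le_min h2 h1
    have : edist (f r) (f (r + h)) ^ p / ENNReal.ofReal (r + h - r) ^ (β * p - 1) ≤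
        VSup f β p (c j) (c (j + 2)) := key.trans hsub
    have hsimp : r + h - r = h := by ring
    rw [hsimp] at this
    rw [ENNReal.div_le_iff (ofReal_rpow_ne_zero hh0 _) (ofReal_rpow_ne_top hh0 _)] at this
    calc edist (f r) (f (r + h)) ^ p ≤
        VSup f β p (c j) (c (j + 2)) * ENNReal.ofReal h ^ (β * p - 1) := this
      _ = _ := mul_comm _ _
  -- integral bound
  have hAsub : Ioc a (b - h) ⊆ Ioc (c 0) (c m) := by
    rw [hc0, hcb m le_rfl]
    exact Ioc_subset_Ioc le_rfl (by linarith)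
  have hint : ∫⁻ r in Ioc a (b - h), edist (f r) (f (r + h)) ^ p ≤
      ENNReal.ofReal h ^ (β * p) * (2 * VSup f β p a b) := by
    calc ∫⁻ r in Ioc a (b - h), edist (f r) (f (r + h)) ^ p
        ≤ ∑ j ∈ Finset.range m, ∫⁻ r in Ioc (c j) (c (j + 1)) ∩ Ioc a (b - h),
            edist (f r) (f (r + h)) ^ p :=
          lintegral_le_sum_parts _ measurableSet_Ioc hcj hAsub
      _ ≤ ∑ j ∈ Finset.range m, ∫⁻ _ in Ioc (c j) (c (j + 1)) ∩ Ioc a (b - h),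
            (ENNReal.ofReal h ^ (β * p - 1) * VSup f β p (c j) (c (j + 2))) := by
          refine Finset.sum_le_sum fun j _ => setLIntegral_mono measurable_const (hcell j)
      _ = ∑ j ∈ Finset.range m, (ENNReal.ofReal h ^ (β * p - 1) * VSup f β p (c j) (c (j + 2)))
            * volume (Ioc (c j) (c (j + 1)) ∩ Ioc a (b - h)) := by
          refine Finset.sum_congr rfl fun j _ => setLIntegral_const _ _
      _ ≤ ∑ j ∈ Finset.range m, (ENNReal.ofReal h ^ (β * p - 1) * VSup f β p (c j) (c (j + 2)))
            * ENNReal.ofReal h := by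
          refine Finset.sum_le_sum fun j _ => ?_
          apply mul_le_mul_right
          calc volume (Ioc (c j) (c (j + 1)) ∩ Ioc a (b - h)) ≤ volume (Ioc (c j) (c (j + 1))) :=
                measure_mono inter_subset_left
            _ = ENNReal.ofReal (c (j + 1) - c j) := Real.volume_Ioc
            _ ≤ ENNReal.ofReal h := by
                apply ENNReal.ofReal_le_ofReal
                have h1 : c (j + 1) ≤ a + (j + 1 : ℕ) * h := min_le_left _ _
                have h2 : c j ≥ min (a + j * h) b := le_rfl
                rcases le_or_gt (a + j * h) b with hord | hord
                · have : c j = a + j * h := min_eq_left hord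
                  push_cast at h1 ⊢
                  nlinarith
                · have hcjb : c j = b := min_eq_right hord.le
                  have : c (j + 1) ≤ b := min_le_right _ _
                  linarith [this, hcjb.symm ▸ (le_refl b)]
      _ = ENNReal.ofReal h ^ (β * p) * ∑ j ∈ Finset.range m, VSup f β p (c j) (c (j + 2)) := by
          rw [Finset.mul_sum]
          refine Finset.sum_congr rfl fun j _ => ?_
          have : ENNReal.ofReal h ^ (β * p - 1) * ENNReal.ofReal h = ENNReal.ofReal h ^ (β * p) := by
            nth_rewrite 2 [← ENNReal.rpow_one (ENNReal.ofReal h)]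
            rw [← ENNReal.rpow_add _ _ (ENNReal.ofReal_pos.mpr hh0).ne' ENNReal.ofReal_ne_top]
            ring_nf
          rw [mul_assoc, mul_comm (VSup _ _ _ _ _), ← mul_assoc, this]
      _ ≤ ENNReal.ofReal h ^ (β * p) * (2 * VSup f β p a b) := by
          apply mul_le_mul_right
          have heo := sum_even_odd_le (v := fun j => VSup f β p (c j) (c (j + 2))) m
          have heven : ∑ k ∈ Finset.range m, VSup f β p (c (2 * k)) (c (2 * k + 2)) ≤
              VSup f β p a b := by
            have := sum_VSup_le f β p (c := fun k => c (2 * k))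
              (fun k => by
                have : 2 * k ≤ 2 * (k + 1) := by omega
                exact hmono this) m
            calc ∑ k ∈ Finset.range m, VSup f β p (c (2 * k)) (c (2 * k + 2))
                = ∑ k ∈ Finset.range m, VSup f β p (c (2 * k)) (c (2 * (k + 1))) := by
                  refine Finset.sum_congr rfl fun k _ => by rw [show 2 * (k + 1) = 2 * k + 2 by ring]
              _ ≤ VSup f β p (c 0) (c (2 * m)) := this
              _ ≤ VSup f β p a b := by
                  rw [hc0, hcb (2 * m) (by omega)]
          have hodd : ∑ k ∈ Finset.range m, VSup f β p (c (2 * k + 1)) (c (2 * k + 1 + 2)) ≤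
              VSup f β p a b := by
            have := sum_VSup_le f β p (c := fun k => c (2 * k + 1))
              (fun k => by
                have : 2 * k + 1 ≤ 2 * (k + 1) + 1 := by omega
                exact hmono this) m
            calc ∑ k ∈ Finset.range m, VSup f β p (c (2 * k + 1)) (c (2 * k + 1 + 2))
                = ∑ k ∈ Finset.range m, VSup f β p (c (2 * k + 1)) (c (2 * (k + 1) + 1)) := by
                  refine Finset.sum_congr rfl fun k _ => by
                    rw [show 2 * (k + 1) + 1 = 2 * k + 1 + 2 by ring]
              _ ≤ VSup f β p (c 1) (c (2 * m + 1)) := this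
              _ ≤ VSup f β p a b := by
                  apply VSup_mono_interval f β p _ (hmono (by omega)) _
                  · rw [← hc0]; exact hmono (by omega)
                  · rw [hcb (2 * m + 1) (by omega)]
          calc ∑ j ∈ Finset.range m, VSup f β p (c j) (c (j + 2)) ≤ _ := heo
            _ ≤ VSup f β p a b + VSup f β p a b := add_le_add heven hodd
            _ = 2 * VSup f β p a b := (two_mul _).symm
  calc ENNReal.ofReal h ^ (-(β * p)) * ∫⁻ r in Ioc a (b - h), edist (f r) (f (r + h)) ^ p
      ≤ ENNReal.ofReal h ^ (-(β * p)) * (ENNReal.ofReal h ^ (β * p) * (2 * VSup f β p a b)) :=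
        mul_le_mul_right hint _
    _ = 2 * VSup f β p a b := by
        rw [← mul_assoc, ENNReal.rpow_neg, ENNReal.inv_mul_cancel
          (ofReal_rpow_ne_zero hh0 _) (ofReal_rpow_ne_top hh0 _), one_mul]

/-- Nikolskii seminorm bounded by Riesz variation. -/
lemma nikNorm_le_VSup (f : ℝ → E) {β p a b : ℝ} (hp0 : 0 < p) (hab : a < b) :
    nikNorm f β p a b ≤ (2 * VSup f β p a b) ^ (1 / p) := by
  refine iSup_le fun h => iSup_le fun hcond => ?_
  obtain ⟨hh0, hhb⟩ := hcond
  have key := nik_core f (β := β) hp0 hab hh0 hhb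
  have heq : ENNReal.ofReal h ^ (-β) *
      (∫⁻ r in Ioc a (b - h), edist (f r) (f (r + h)) ^ p) ^ (1 / p) =
      (ENNReal.ofReal h ^ (-(β * p)) *
        ∫⁻ r in Ioc a (b - h), edist (f r) (f (r + h)) ^ p) ^ (1 / p) := by
    rw [ENNReal.mul_rpow_of_nonneg _ _ (by positivity : (0:ℝ) ≤ 1 / p)]
    congr 1
    rw [← ENNReal.rpow_mul]
    congr 1
    field_simp
  rw [heq]
  exact ENNReal.rpow_le_rpow key (by positivity)

end NikCore
section GRR
open Set MeasureTheory Filter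
variable {E : Type*} [PseudoEMetricSpace E]

/-- Sobolev–Slobodeckij kernel. -/
noncomputable def PhiK (g : ℝ → E) (β p : ℝ) (u v : ℝ) : ℝ≥0∞ :=
  edist (g u) (g v) ^ p / ENNReal.ofReal |v - u| ^ (1 + β * p)

/-- Double integral of the kernel over a square. -/
noncomputable def Jdbl (g : ℝ → E) (β p a b : ℝ) : ℝ≥0∞ :=
  ∫⁻ w in Ioc a b, ∫⁻ v in Ioc a b, PhiK g β p w v

lemma measurable_phiK {g : ℝ → E} (hg : Continuous g) (β p : ℝ) :
    Measurable (fun q : ℝ × ℝ => PhiK g β p q.1 q.2) := by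
  apply Measurable.div
  · apply Measurable.pow_const
    exact ((hg.comp continuous_fst).edist (hg.comp continuous_snd)).measurable
  · apply Measurable.pow_const
    exact (ENNReal.continuous_ofReal.comp ((continuous_snd.sub continuous_fst).abs)).measurable

lemma measurable_phiK_right {g : ℝ → E} (hg : Continuous g) (β p w : ℝ) :
    Measurable (fun v => PhiK g β p w v) :=
  (measurable_phiK hg β p).comp (measurable_const.prodMk measurable_id)

lemma double_le_Jdbl {g : ℝ → E} (β p a b : ℝ) {S S' : Set ℝ}
    (hS : S ⊆ Ioc a b) (hS' : S' ⊆ Ioc a b) :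
    ∫⁻ w in S, ∫⁻ v in S', PhiK g β p w v ≤ Jdbl g β p a b := by
  calc ∫⁻ w in S, ∫⁻ v in S', PhiK g β p w v
      ≤ ∫⁻ w in S, ∫⁻ v in Ioc a b, PhiK g β p w v :=
        lintegral_mono fun w => lintegral_mono' (Measure.restrict_mono hS' le_rfl) le_rfl
    _ ≤ Jdbl g β p a b :=
        lintegral_mono' (Measure.restrict_mono hS le_rfl) le_rfl

lemma markov_aux {μ : Measure ℝ} {F : ℝ → ℝ≥0∞} (hF : AEMeasurable F μ) {c M : ℝ≥0∞}
    (hc0 : c ≠ 0) (hct : c ≠ ⊤) (hM : ∫⁻ x, F x ∂μ ≤ M) : μ {x | c ≤ F x} ≤ M / c := by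
  rw [ENNReal.le_div_iff_mul_le (Or.inl hc0) (Or.inl hct)]
  calc μ {x | c ≤ F x} * c = c * μ {x | c ≤ F x} := mul_comm _ _
    _ ≤ ∫⁻ x, F x ∂μ := mul_meas_ge_le_lintegral₀ hF c
    _ ≤ M := hM

lemma ennreal_div4 {x L : ℝ≥0∞} (hx0 : x ≠ 0) (hxt : x ≠ ⊤) (hL0 : L ≠ 0) (hLt : L ≠ ⊤) :
    x / (4 * x / L) = L / 4 := by
  rw [div_eq_mul_inv x, ENNReal.inv_div (Or.inl hLt) (Or.inl hL0), ← mul_div_assoc,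
    mul_comm (4 : ℝ≥0∞) x, ENNReal.mul_div_mul_left _ _ hx0 hxt]

lemma exists_small_pair {A : Set ℝ} {F1 F2 : ℝ → ℝ≥0∞}
    (hF1 : AEMeasurable F1 (volume.restrict A)) (hF2 : AEMeasurable F2 (volume.restrict A))
    {c1 c2 M1 M2 : ℝ≥0∞} (hc10 : c1 ≠ 0) (hc1t : c1 ≠ ⊤) (hc20 : c2 ≠ 0) (hc2t : c2 ≠ ⊤)
    (hM1 : ∫⁻ x in A, F1 x ≤ M1) (hM2 : ∫⁻ x in A, F2 x ≤ M2)
    (hsum : M1 / c1 + M2 / c2 < volume A) :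
    ∃ x ∈ A, F1 x < c1 ∧ F2 x < c2 := by
  by_contra hcon
  push_neg at hcon
  have hsub : A ⊆ {x | c1 ≤ F1 x} ∪ {x | c2 ≤ F2 x} := by
    intro x hx
    rcases le_or_gt c1 (F1 x) with h | h
    · exact Or.inl h
    · exact Or.inr (hcon x hx h)
  have h1 := markov_aux hF1 hc10 hc1t hM1
  have h2 := markov_aux hF2 hc20 hc2t hM2
  have : volume A ≤ M1 / c1 + M2 / c2 := by
    calc volume A = volume.restrict A A := (Measure.restrict_apply_self _ _).symm
      _ ≤ volume.restrict A ({x | c1 ≤ F1 x} ∪ {x | c2 ≤ F2 x}) := measure_mono hsub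
      _ ≤ volume.restrict A {x | c1 ≤ F1 x} + volume.restrict A {x | c2 ≤ F2 x} :=
          measure_union_le _ _
      _ ≤ M1 / c1 + M2 / c2 := add_le_add h1 h2
  exact absurd hsum (not_lt.mpr this)

lemma link_calc {J L : ℝ≥0∞} (hL0 : L ≠ 0) (hLt : L ≠ ⊤) (c : ℝ) :
    4 * (4 * J / L) / (L / 2) * L ^ (1 + c) = 32 * J * L ^ (c - 1) := by
  have ha : (L / 2)⁻¹ = 2 * L⁻¹ := by
    rw [ENNReal.inv_div (Or.inl (by norm_num)) (Or.inl (by norm_num)), div_eq_mul_inv]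
  have hkey : L⁻¹ * (L⁻¹ * L ^ (1 + c)) = L ^ (c - 1) := by
    rw [← ENNReal.rpow_neg_one L, ← ENNReal.rpow_add _ _ hL0 hLt,
      ← ENNReal.rpow_add _ _ hL0 hLt]
    congr 1
    ring
  rw [div_eq_mul_inv _ (L / 2), ha, div_eq_mul_inv (4 * J) L]
  calc 4 * (4 * J * L⁻¹) * (2 * L⁻¹) * L ^ (1 + c)
      = 32 * J * (L⁻¹ * (L⁻¹ * L ^ (1 + c))) := by ring
    _ = 32 * J * L ^ (c - 1) := by rw [hkey]

lemma edist_pow_le_phiK (g : ℝ → E) {β p : ℝ} (hp0 : 0 < p) (hexp : 0 ≤ 1 + β * p)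
    {u v ℓ' : ℝ} (hℓ : |v - u| ≤ ℓ') :
    edist (g u) (g v) ^ p ≤ PhiK g β p u v * ENNReal.ofReal ℓ' ^ (1 + β * p) := by
  rcases eq_or_ne (|v - u|) 0 with h0 | h0
  · have huv : v = u := by
      have := abs_eq_zero.mp h0
      linarith [sub_eq_zero.mp this]
    subst huv
    rw [edist_self, ENNReal.zero_rpow_of_pos hp0]
    exact zero_le
  · have habs : 0 < |v - u| := (abs_nonneg _).lt_of_ne (Ne.symm h0)
    have key : PhiK g β p u v * ENNReal.ofReal |v - u| ^ (1 + β * p) =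
        edist (g u) (g v) ^ p :=
      ENNReal.div_mul_cancel (ofReal_rpow_ne_zero habs _) (ofReal_rpow_ne_top habs _)
    rw [← key]
    exact mul_le_mul_right (ENNReal.rpow_le_rpow (ENNReal.ofReal_le_ofReal hℓ) hexp) _

lemma edist_le_sum_chain (g : ℝ → E) (x : ℕ → ℝ) (n : ℕ) :
    edist (g (x 0)) (g (x n)) ≤ ∑ k ∈ Finset.range n, edist (g (x k)) (g (x (k + 1))) := by
  induction n with
  | zero => simp
  | succ n ih =>
    rw [Finset.sum_range_succ]
    exact le_trans (edist_triangle _ (g (x n)) _) (add_le_add_left ih _)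

/-- The GRR chain construction along a shrinking family of intervals. -/
lemma grr_chain (g : ℝ → E) (hg : Continuous g) {β p : ℝ} (hp0 : 0 < p) (hβp : 1 < β * p)
    {a b cpt : ℝ} (hab : a < b)
    (S : ℕ → Set ℝ)
    (hSnest : ∀ k, S (k + 1) ⊆ S k)
    (hSdiam : ∀ k, ∀ x ∈ S k, ∀ y ∈ S k, |x - y| ≤ (b - a) / 2 ^ k)
    (hSvol : ∀ k, volume (S k) = ENNReal.ofReal ((b - a) / 2 ^ k))
    (hcpt : ∀ k, ∀ x ∈ S k, |x - cpt| ≤ (b - a) / 2 ^ k)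
    {Jη : ℝ≥0∞} (hJ0 : Jη ≠ 0) (hJt : Jη ≠ ⊤)
    (hJ : ∀ j k, ∫⁻ w in S j, ∫⁻ v in S k, PhiK g β p w v ≤ Jη)
    {w0 : ℝ} (hw0 : w0 ∈ S 0)
    (hI0 : ∫⁻ v in S 1, PhiK g β p w0 v ≤
      4 * Jη / ENNReal.ofReal ((b - a) / 2 ^ 0)) :
    edist (g cpt) (g w0) ≤ (32 * Jη) ^ (1 / p) *
      ENNReal.ofReal (b - a) ^ ((β * p - 1) / p) *
      (1 - (2⁻¹ : ℝ≥0∞) ^ ((β * p - 1) / p))⁻¹ := by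
  set γ := (β * p - 1) / p with hγ
  set ℓ : ℕ → ℝ := fun k => (b - a) / 2 ^ k with hℓ
  set L : ℕ → ℝ≥0∞ := fun k => ENNReal.ofReal (ℓ k) with hL
  set Q : ℕ → ℝ≥0∞ := fun k => 4 * Jη / L k with hQ
  have hba : 0 < b - a := by linarith
  have hℓpos : ∀ k, 0 < ℓ k := fun k => by positivity
  have hL0 : ∀ k, L k ≠ 0 := fun k => (ENNReal.ofReal_pos.mpr (hℓpos k)).ne'
  have hLt : ∀ k, L k ≠ ⊤ := fun _ => ENNReal.ofReal_ne_top
  have hQ0 : ∀ k, Q k ≠ 0 := by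
    intro k
    simp only [hQ, ne_eq, ENNReal.div_eq_zero_iff]
    push_neg
    exact ⟨by simp [hJ0], hLt k⟩
  have hQt : ∀ k, Q k ≠ ⊤ := by
    intro k
    simp only [hQ]
    exact (ENNReal.div_lt_top (ENNReal.mul_ne_top (by norm_num) hJt) (hL0 k)).ne
  have hLsucc : ∀ k, L (k + 1) = L k / 2 := by
    intro k
    have : ℓ (k + 1) = ℓ k / 2 := by
      simp only [hℓ, pow_succ]
      ring
    rw [hL]
    simp only [this, ENNReal.ofReal_div_of_pos (by norm_num : (0:ℝ) < 2)]
    norm_num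
  -- the recursive step
  have step : ∀ k (w : ℝ), w ∈ S k → (∫⁻ v in S (k + 1), PhiK g β p w v) ≤ Q k →
      ∃ w', w' ∈ S (k + 1) ∧ (∫⁻ v in S (k + 2), PhiK g β p w' v) ≤ Q (k + 1) ∧
        PhiK g β p w w' ≤ 4 * Q k / L (k + 1) := by
    intro k w hw hIw
    have hms : Measurable fun v => ∫⁻ x in S (k + 2), PhiK g β p v x := by
      apply Measurable.lintegral_prod_right'
        (f := fun q : ℝ × ℝ => PhiK g β p q.1 q.2)
      exact measurable_phiK hg β p
    have hth0 : 4 * Q k / L (k + 1) ≠ 0 := by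
      simp only [ne_eq, ENNReal.div_eq_zero_iff]
      push_neg
      exact ⟨by simp [hQ0 k], hLt (k + 1)⟩
    have htht : 4 * Q k / L (k + 1) ≠ ⊤ :=
      (ENNReal.div_lt_top (ENNReal.mul_ne_top (by norm_num) (hQt k)) (hL0 (k + 1))).ne
    have hlt : Jη / Q (k + 1) + Q k / (4 * Q k / L (k + 1)) < volume (S (k + 1)) := by
      rw [hSvol (k + 1)]
      have e1 : Jη / Q (k + 1) = L (k + 1) / 4 := by
        rw [hQ]
        exact ennreal_div4 hJ0 hJt (hL0 (k + 1)) (hLt (k + 1))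
      have e2 : Q k / (4 * Q k / L (k + 1)) = L (k + 1) / 4 :=
        ennreal_div4 (hQ0 k) (hQt k) (hL0 (k + 1)) (hLt (k + 1))
      rw [e1, e2]
      have e3 : L (k + 1) / 4 + L (k + 1) / 4 = L (k + 1) / 2 := by
        rw [ENNReal.div_add_div_same]
        have : L (k + 1) + L (k + 1) = 2 * L (k + 1) := (two_mul _).symm
        rw [this, show (4 : ℝ≥0∞) = 2 * 2 by norm_num,
          ENNReal.mul_div_mul_left _ _ (by norm_num) (by norm_num)]
      rw [e3]
      exact ENNReal.half_lt_self (hL0 (k + 1)) (hLt (k + 1))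
    obtain ⟨w', hw'A, hw'1, hw'2⟩ :=
      exists_small_pair (A := S (k + 1))
        (F1 := fun v => ∫⁻ x in S (k + 2), PhiK g β p v x)
        (F2 := fun v => PhiK g β p w v)
        hms.aemeasurable ((measurable_phiK_right hg β p w).aemeasurable)
        (hQ0 (k + 1)) (hQt (k + 1)) hth0 htht
        (hJ (k + 1) (k + 2)) hIw hlt
    exact ⟨w', hw'A, hw'1.le, hw'2.le⟩
  choose F hFmem hFbound hFphi using step
  -- the chain of points
  let seq : ∀ k : ℕ, {w : ℝ // w ∈ S k ∧ (∫⁻ v in S (k + 1), PhiK g β p w v) ≤ Q k} :=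
    fun k => Nat.rec ⟨w0, hw0, hI0⟩
      (fun k ih => ⟨F k ih.1 ih.2.1 ih.2.2, hFmem k ih.1 ih.2.1 ih.2.2,
        hFbound k ih.1 ih.2.1 ih.2.2⟩) k
  have hlink : ∀ k, PhiK g β p (seq k).1 (seq (k + 1)).1 ≤ 4 * Q k / L (k + 1) :=
    fun k => hFphi k (seq k).1 (seq k).2.1 (seq k).2.2
  have hseq0 : (seq 0).1 = w0 := rfl
  -- geometric bound on each link
  have hexp : 0 ≤ 1 + β * p := by linarith
  have hlinkdist : ∀ k, edist (g ((seq k).1)) (g ((seq (k + 1)).1)) ^ p ≤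
      32 * Jη * L k ^ (β * p - 1) := by
    intro k
    have hd : |(seq (k + 1)).1 - (seq k).1| ≤ ℓ k := by
      rw [abs_sub_comm]
      exact hSdiam k _ (seq k).2.1 _ (hSnest k (seq (k + 1)).2.1)
    calc edist (g ((seq k).1)) (g ((seq (k + 1)).1)) ^ p
        ≤ PhiK g β p (seq k).1 (seq (k + 1)).1 * ENNReal.ofReal (ℓ k) ^ (1 + β * p) :=
          edist_pow_le_phiK g hp0 hexp hd
      _ ≤ (4 * Q k / L (k + 1)) * L k ^ (1 + β * p) := by
          exact mul_le_mul_left (hlink k) _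
      _ = 32 * Jη * L k ^ (β * p - 1) := by
          rw [hLsucc k, hQ]
          exact link_calc (hL0 k) (hLt k) (β * p)
  have hγpos : 0 < γ := by
    rw [hγ]
    exact div_pos (by linarith) hp0
  -- L k ^ γ decomposition
  have hLk : ∀ k, L k ^ γ =
      ENNReal.ofReal (b - a) ^ γ * ((2⁻¹ : ℝ≥0∞) ^ γ) ^ k := by
    intro k
    have h1 : ℓ k = (b - a) * (2⁻¹ : ℝ) ^ k := by
      rw [hℓ]
      simp only [div_eq_mul_inv, inv_pow]
    have h2 : L k = ENNReal.ofReal (b - a) * ((2⁻¹ : ℝ≥0∞)) ^ k := by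
      rw [hL]
      simp only [h1]
      rw [ENNReal.ofReal_mul hba.le, ENNReal.ofReal_pow (by norm_num : (0:ℝ) ≤ 2⁻¹)]
      congr 2
      rw [ENNReal.ofReal_inv_of_pos (by norm_num : (0:ℝ) < 2)]
      norm_num
    rw [h2, ENNReal.mul_rpow_of_nonneg _ _ hγpos.le]
    congr 1
    rw [← ENNReal.rpow_natCast (2⁻¹ : ℝ≥0∞) k, ← ENNReal.rpow_mul, mul_comm (k : ℝ) γ,
      ENNReal.rpow_mul, ENNReal.rpow_natCast]
  have hlinkdist' : ∀ k, edist (g ((seq k).1)) (g ((seq (k + 1)).1)) ≤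
      (32 * Jη) ^ (1 / p) * ENNReal.ofReal (b - a) ^ γ * ((2⁻¹ : ℝ≥0∞) ^ γ) ^ k := by
    intro k
    have h1 := ENNReal.rpow_le_rpow (hlinkdist k) (by positivity : (0:ℝ) ≤ 1 / p)
    have h2 : (edist (g ((seq k).1)) (g ((seq (k + 1)).1)) ^ p) ^ (1 / p) =
        edist (g ((seq k).1)) (g ((seq (k + 1)).1)) := by
      rw [← ENNReal.rpow_mul, mul_one_div, div_self hp0.ne', ENNReal.rpow_one]
    have h3 : (32 * Jη * L k ^ (β * p - 1)) ^ (1 / p) =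
        (32 * Jη) ^ (1 / p) * L k ^ γ := by
      rw [ENNReal.mul_rpow_of_nonneg _ _ (by positivity : (0:ℝ) ≤ 1 / p)]
      congr 1
      rw [← ENNReal.rpow_mul, mul_one_div, hγ]
    rw [h2, h3, hLk k, ← mul_assoc] at h1
    exact h1
  set M := (32 * Jη) ^ (1 / p) * ENNReal.ofReal (b - a) ^ γ *
    (1 - (2⁻¹ : ℝ≥0∞) ^ γ)⁻¹ with hM
  have hsumM : ∀ n, ∑ k ∈ Finset.range n,
      edist (g ((seq k).1)) (g ((seq (k + 1)).1)) ≤ M := by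
    intro n
    calc ∑ k ∈ Finset.range n, edist (g ((seq k).1)) (g ((seq (k + 1)).1))
        ≤ ∑ k ∈ Finset.range n,
            ((32 * Jη) ^ (1 / p) * ENNReal.ofReal (b - a) ^ γ * ((2⁻¹ : ℝ≥0∞) ^ γ) ^ k) :=
          Finset.sum_le_sum fun k _ => hlinkdist' k
      _ = (32 * Jη) ^ (1 / p) * ENNReal.ofReal (b - a) ^ γ *
            ∑ k ∈ Finset.range n, ((2⁻¹ : ℝ≥0∞) ^ γ) ^ k := by rw [Finset.mul_sum]
      _ ≤ M := by
          rw [hM]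
          apply mul_le_mul_right
          calc ∑ k ∈ Finset.range n, ((2⁻¹ : ℝ≥0∞) ^ γ) ^ k
              ≤ ∑' k, ((2⁻¹ : ℝ≥0∞) ^ γ) ^ k := ENNReal.sum_le_tsum _
            _ = (1 - (2⁻¹ : ℝ≥0∞) ^ γ)⁻¹ := ENNReal.tsum_geometric _
  -- convergence to cpt
  have hseqtend : Tendsto (fun n => (seq n).1) atTop (nhds cpt) := by
    have hg0 : Tendsto ℓ atTop (nhds 0) := by
      have h2 := (tendsto_pow_atTop_nhds_zero_of_lt_one (by norm_num : (0:ℝ) ≤ 2⁻¹)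
        (by norm_num : (2⁻¹:ℝ) < 1)).const_mul (b - a)
      have he : ℓ = fun k => (b - a) * (2⁻¹ : ℝ) ^ k := by
        funext k
        rw [hℓ]
        simp [div_eq_mul_inv, inv_pow]
      rw [he]
      simpa using h2
    rw [tendsto_iff_dist_tendsto_zero]
    exact squeeze_zero (fun n => dist_nonneg)
      (fun n => by rw [Real.dist_eq]; exact hcpt n _ (seq n).2.1) hg0
  have htend : Tendsto (fun n => edist (g cpt) (g ((seq n).1))) atTop (nhds 0) := by
    have := Tendsto.edist (tendsto_const_nhds : Tendsto (fun _ : ℕ => g cpt) atTop (nhds (g cpt)))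
      ((hg.tendsto cpt).comp hseqtend)
    simpa [edist_self] using this
  have hall : ∀ n, edist (g cpt) (g w0) ≤ edist (g cpt) (g ((seq n).1)) + M := by
    intro n
    calc edist (g cpt) (g w0)
        ≤ edist (g cpt) (g ((seq n).1)) + edist (g ((seq n).1)) (g w0) :=
          edist_triangle _ _ _
      _ ≤ edist (g cpt) (g ((seq n).1)) + M := by
          apply add_le_add_right
          rw [← hseq0, edist_comm]
          exact le_trans (edist_le_sum_chain g (fun k => (seq k).1) n) (hsumM n)
  have := ge_of_tendsto
    (htend.add (tendsto_const_nhds : Tendsto (fun _ : ℕ => M) atTop (nhds M)))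
    (Filter.Eventually.of_forall hall)
  rwa [zero_add] at this

end GRR
section GRRMain
open Set MeasureTheory Filter
variable {E : Type*} [PseudoEMetricSpace E]

/-- The constant in the Garsia–Rodemich–Rumsey-type estimate. -/
noncomputable def CGRR (β p : ℝ) : ℝ≥0∞ :=
  2 ^ p * 32 * ((1 - (2⁻¹ : ℝ≥0∞) ^ ((β * p - 1) / p))⁻¹) ^ p

lemma one_sub_r_ne_zero {β p : ℝ} (hp0 : 0 < p) (hβp : 1 < β * p) :
    (1 : ℝ≥0∞) - (2⁻¹ : ℝ≥0∞) ^ ((β * p - 1) / p) ≠ 0 := by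
  have hr : (2⁻¹ : ℝ≥0∞) ^ ((β * p - 1) / p) < 1 :=
    ENNReal.rpow_lt_one (by norm_num) (div_pos (by linarith) hp0)
  rw [ne_eq, tsub_eq_zero_iff_le]
  exact not_le.mpr hr

lemma CGRR_ne_top {β p : ℝ} (hp0 : 0 < p) (hβp : 1 < β * p) : CGRR β p ≠ ⊤ := by
  unfold CGRR
  apply ENNReal.mul_ne_top (ENNReal.mul_ne_top ?_ (by norm_num)) ?_
  · exact ENNReal.rpow_ne_top_of_nonneg hp0.le (by norm_num)
  · exact ENNReal.rpow_ne_top_of_nonneg hp0.le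
      (ENNReal.inv_ne_top.mpr (one_sub_r_ne_zero hp0 hβp))

lemma CGRR_ne_zero {β p : ℝ} (hp0 : 0 < p) (hβp : 1 < β * p) : CGRR β p ≠ 0 := by
  unfold CGRR
  apply mul_ne_zero (mul_ne_zero ?_ (by norm_num)) ?_
  · exact (ENNReal.rpow_pos (by norm_num) (by norm_num)).ne'
  · apply (ENNReal.rpow_pos ?_ ?_).ne'
    · rw [pos_iff_ne_zero, ne_eq, ENNReal.inv_eq_zero]
      exact (lt_of_le_of_lt tsub_le_self ENNReal.one_lt_top).ne
    · rw [ne_eq, ENNReal.inv_eq_top]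
      exact one_sub_r_ne_zero hp0 hβp

/-- Garsia–Rodemich–Rumsey-type pointwise estimate. -/
lemma grr_main (g : ℝ → E) (hg : Continuous g) {β p : ℝ} (hp0 : 0 < p) (hβp : 1 < β * p)
    {a b : ℝ} (hab : a < b) :
    edist (g a) (g b) ^ p ≤
      CGRR β p * ENNReal.ofReal (b - a) ^ (β * p - 1) * Jdbl g β p a b := by
  have hba : 0 < b - a := by linarith
  set γ := (β * p - 1) / p with hγ
  set D := ENNReal.ofReal (b - a) ^ (β * p - 1) with hD
  have hD0 : D ≠ 0 := ofReal_rpow_ne_zero hba _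
  have hDt : D ≠ ⊤ := ofReal_rpow_ne_top hba _
  set K := CGRR β p * D with hK
  have hK0 : K ≠ 0 := mul_ne_zero (CGRR_ne_zero hp0 hβp) hD0
  have hKt : K ≠ ⊤ := ENNReal.mul_ne_top (CGRR_ne_top hp0 hβp) hDt
  show edist (g a) (g b) ^ p ≤ K * Jdbl g β p a b
  apply ENNReal.le_of_forall_pos_le_add
  intro ε hε hKJ
  have hJne : Jdbl g β p a b ≠ ⊤ := by
    intro h
    rw [h, ENNReal.mul_top hK0] at hKJ
    exact absurd hKJ (lt_irrefl _)
  set η := (ε : ℝ≥0∞) / K with hη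
  have hη0 : η ≠ 0 := by
    rw [hη, ne_eq, ENNReal.div_eq_zero_iff]
    push_neg
    exact ⟨ENNReal.coe_ne_zero.mpr hε.ne', hKt⟩
  have hηt : η ≠ ⊤ := (ENNReal.div_lt_top ENNReal.coe_ne_top hK0).ne
  have hKη : K * η = ε := by
    rw [hη, ENNReal.mul_div_cancel hK0 hKt]
  suffices hmain : edist (g a) (g b) ^ p ≤ K * (Jdbl g β p a b + η) by
    calc edist (g a) (g b) ^ p ≤ K * (Jdbl g β p a b + η) := hmain
      _ = K * Jdbl g β p a b + K * η := mul_add _ _ _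
      _ = K * Jdbl g β p a b + ε := by rw [hKη]
  set Jη := Jdbl g β p a b + η with hJηdef
  have hJη0 : Jη ≠ 0 := by
    rw [hJηdef]
    intro h
    rw [add_eq_zero] at h
    exact hη0 h.2
  have hJηt : Jη ≠ ⊤ := ENNReal.add_ne_top.mpr ⟨hJne, hηt⟩
  have hJle : Jdbl g β p a b ≤ Jη := le_self_add
  set SA : ℕ → Set ℝ := fun k => Ioc a (a + (b - a) / 2 ^ k) with hSA
  set SB : ℕ → Set ℝ := fun k => Ioc (b - (b - a) / 2 ^ k) b with hSB
  have hℓle : ∀ k : ℕ, (b - a) / 2 ^ k ≤ b - a := fun k =>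
    div_le_self hba.le (one_le_pow₀ (by norm_num))
  have hℓpos : ∀ k : ℕ, 0 < (b - a) / 2 ^ k := fun k => by positivity
  have hℓmono : ∀ k : ℕ, (b - a) / 2 ^ (k + 1) ≤ (b - a) / 2 ^ k := by
    intro k
    rw [div_le_div_iff₀ (by positivity) (by positivity)]
    have h2 : (2:ℝ) ^ (k + 1) = 2 ^ k * 2 := pow_succ 2 k
    nlinarith [hba.le, pow_pos (by norm_num : (0:ℝ) < 2) k]
  have hSAsub : ∀ k, SA k ⊆ Ioc a b := fun k =>
    Ioc_subset_Ioc le_rfl (by linarith [hℓle k])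
  have hSBsub : ∀ k, SB k ⊆ Ioc a b := fun k =>
    Ioc_subset_Ioc (by linarith [hℓle k]) le_rfl
  have hSA0 : SA 0 = Ioc a b := by
    simp only [hSA, pow_zero, div_one]
    congr 1
    ring
  have hSB0 : SB 0 = Ioc a b := by
    simp only [hSB, pow_zero, div_one]
    congr 1
    ring
  have hJSA : ∀ j k, ∫⁻ w in SA j, ∫⁻ v in SA k, PhiK g β p w v ≤ Jη := fun j k =>
    (double_le_Jdbl β p a b (hSAsub j) (hSAsub k)).trans hJle
  have hJSB : ∀ j k, ∫⁻ w in SB j, ∫⁻ v in SB k, PhiK g β p w v ≤ Jη := fun j k =>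
    (double_le_Jdbl β p a b (hSBsub j) (hSBsub k)).trans hJle
  set Q0 := 4 * Jη / ENNReal.ofReal ((b - a) / 2 ^ (0 : ℕ)) with hQ0def
  have hL00 : ENNReal.ofReal ((b - a) / 2 ^ (0 : ℕ)) ≠ 0 :=
    (ENNReal.ofReal_pos.mpr (hℓpos 0)).ne'
  have hL0t : ENNReal.ofReal ((b - a) / 2 ^ (0 : ℕ)) ≠ ⊤ := ENNReal.ofReal_ne_top
  have hQ00 : Q0 ≠ 0 := by
    rw [hQ0def, ne_eq, ENNReal.div_eq_zero_iff]
    push_neg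
    refine ⟨?_, hL0t⟩
    simp [hJη0]
  have hQ0t : Q0 ≠ ⊤ :=
    (ENNReal.div_lt_top (ENNReal.mul_ne_top (by norm_num) hJηt) hL00).ne
  have hmsA : Measurable fun v => ∫⁻ x in SA 1, PhiK g β p v x :=
    Measurable.lintegral_prod_right' (f := fun q : ℝ × ℝ => PhiK g β p q.1 q.2)
      (measurable_phiK hg β p)
  have hmsB : Measurable fun v => ∫⁻ x in SB 1, PhiK g β p v x :=
    Measurable.lintegral_prod_right' (f := fun q : ℝ × ℝ => PhiK g β p q.1 q.2)
      (measurable_phiK hg β p)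
  have hbd1 : ∫⁻ v in Ioc a b, ∫⁻ x in SA 1, PhiK g β p v x ≤ Jη :=
    (double_le_Jdbl β p a b le_rfl (hSAsub 1)).trans hJle
  have hbd2 : ∫⁻ v in Ioc a b, ∫⁻ x in SB 1, PhiK g β p v x ≤ Jη :=
    (double_le_Jdbl β p a b le_rfl (hSBsub 1)).trans hJle
  have hlt : Jη / Q0 + Jη / Q0 < volume (Ioc a b) := by
    rw [Real.volume_Ioc]
    have e1 : Jη / Q0 = ENNReal.ofReal ((b - a) / 2 ^ (0 : ℕ)) / 4 := by
      rw [hQ0def]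
      exact ennreal_div4 hJη0 hJηt hL00 hL0t
    rw [e1, ENNReal.div_add_div_same]
    have e2 : ENNReal.ofReal ((b - a) / 2 ^ (0 : ℕ)) = ENNReal.ofReal (b - a) := by
      norm_num
    rw [e2]
    rw [show ENNReal.ofReal (b - a) + ENNReal.ofReal (b - a) = 2 * ENNReal.ofReal (b - a)
      from (two_mul _).symm, show (4 : ℝ≥0∞) = 2 * 2 by norm_num,
      ENNReal.mul_div_mul_left _ _ (by norm_num) (by norm_num)]
    exact ENNReal.half_lt_self (ENNReal.ofReal_pos.mpr hba).ne' ENNReal.ofReal_ne_top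
  obtain ⟨w0, hw0mem, hw0A, hw0B⟩ :=
    exists_small_pair (A := Ioc a b)
      (F1 := fun v => ∫⁻ x in SA 1, PhiK g β p v x)
      (F2 := fun v => ∫⁻ x in SB 1, PhiK g β p v x)
      hmsA.aemeasurable hmsB.aemeasurable hQ00 hQ0t hQ00 hQ0t hbd1 hbd2 hlt
  have chainA := grr_chain g hg hp0 hβp (cpt := a) hab SA
    (fun k => Ioc_subset_Ioc le_rfl (by linarith [hℓmono k]))
    (fun k x hx y hy => by
      rw [abs_sub_le_iff]
      obtain ⟨hx1, hx2⟩ := hx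
      obtain ⟨hy1, hy2⟩ := hy
      constructor <;> linarith)
    (fun k => by
      simp only [hSA]
      rw [Real.volume_Ioc]
      congr 1
      ring)
    (fun k x hx => by
      rw [abs_sub_le_iff]
      obtain ⟨hx1, hx2⟩ := hx
      constructor <;> linarith [hℓpos k])
    hJη0 hJηt hJSA (hSA0 ▸ hw0mem) hw0A.le
  have chainB := grr_chain g hg hp0 hβp (cpt := b) hab SB
    (fun k => Ioc_subset_Ioc (by linarith [hℓmono k]) le_rfl)
    (fun k x hx y hy => by
      rw [abs_sub_le_iff]
      obtain ⟨hx1, hx2⟩ := hx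
      obtain ⟨hy1, hy2⟩ := hy
      constructor <;> linarith)
    (fun k => by
      simp only [hSB]
      rw [Real.volume_Ioc]
      congr 1
      ring)
    (fun k x hx => by
      rw [abs_sub_le_iff]
      obtain ⟨hx1, hx2⟩ := hx
      constructor <;> linarith [hℓpos k])
    hJη0 hJηt hJSB (hSB0 ▸ hw0mem) hw0B.le
  set M := (32 * Jη) ^ (1 / p) * ENNReal.ofReal (b - a) ^ γ *
    (1 - (2⁻¹ : ℝ≥0∞) ^ γ)⁻¹ with hM
  have htri : edist (g a) (g b) ≤ 2 * M := by
    calc edist (g a) (g b) ≤ edist (g a) (g w0) + edist (g w0) (g b) := edist_triangle _ _ _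
      _ ≤ M + M := by
          refine add_le_add chainA ?_
          rw [edist_comm]
          exact chainB
      _ = 2 * M := (two_mul M).symm
  calc edist (g a) (g b) ^ p ≤ (2 * M) ^ p := ENNReal.rpow_le_rpow htri hp0.le
    _ = 2 ^ p * M ^ p := ENNReal.mul_rpow_of_nonneg _ _ hp0.le
    _ = K * Jη := by
        rw [hM, ENNReal.mul_rpow_of_nonneg _ _ hp0.le, ENNReal.mul_rpow_of_nonneg _ _ hp0.le]
        have e1 : ((32 * Jη) ^ (1 / p)) ^ p = 32 * Jη := by
          rw [← ENNReal.rpow_mul, one_div, inv_mul_cancel₀ hp0.ne', ENNReal.rpow_one]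
        have e2 : (ENNReal.ofReal (b - a) ^ γ) ^ p = D := by
          rw [hD, ← ENNReal.rpow_mul, hγ, div_mul_cancel₀ _ hp0.ne']
        rw [e1, e2, hK]
        unfold CGRR
        rw [← hγ]
        ring

end GRRMain
section Assemble
open Set MeasureTheory
variable {E : Type*} [PseudoEMetricSpace E]

lemma phiK_symm (g : ℝ → E) (β p u v : ℝ) : PhiK g β p u v = PhiK g β p v u := by
  unfold PhiK
  rw [edist_comm, abs_sub_comm]

lemma exists_cont_ext {f : ℝ → E} {T : ℝ} (hT : 0 ≤ T) (hf : ContinuousOn f (Icc 0 T)) :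
    ∃ g : ℝ → E, Continuous g ∧ ∀ x ∈ Icc 0 T, f x = g x := by
  refine ⟨fun x => f (min T (max 0 x)), ?_, ?_⟩
  · apply hf.comp_continuous (continuous_const.min (continuous_const.max continuous_id))
    intro x
    exact ⟨le_min hT (le_max_left 0 x), min_le_left _ _⟩
  · intro x hx
    show f x = f (min T (max 0 x))
    rw [max_eq_right hx.1, min_eq_right hx.2]

lemma sobNorm_eq_Jdbl (f : ℝ → E) (β p s t : ℝ) :
    sobNorm f β p s t = Jdbl f β p s t ^ (1 / p) := by
  unfold sobNorm Jdbl
  congr 1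
  exact lintegral_congr fun v => lintegral_congr fun u => phiK_symm f β p u v

lemma Jdbl_congr (f g : ℝ → E) {β p s t : ℝ} (heq : ∀ x ∈ Icc s t, f x = g x) :
    Jdbl f β p s t = Jdbl g β p s t := by
  unfold Jdbl
  refine lintegral_congr_ae ?_
  filter_upwards [self_mem_ae_restrict (measurableSet_Ioc (a := s) (b := t))] with w hw
  refine lintegral_congr_ae ?_
  filter_upwards [self_mem_ae_restrict (measurableSet_Ioc (a := s) (b := t))] with v hv
  unfold PhiK
  rw [heq w ⟨hw.1.le, hw.2⟩, heq v ⟨hv.1.le, hv.2⟩]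

lemma VSup_le_CJ (f g : ℝ → E) (hg : Continuous g) {β p s t : ℝ}
    (hp0 : 0 < p) (hβp : 1 < β * p) (heq : ∀ x ∈ Icc s t, f x = g x) :
    VSup f β p s t ≤ CGRR β p * Jdbl g β p s t := by
  refine iSup_le fun n => iSup_le fun u => iSup_le fun hP => ?_
  unfold rieszSum
  have humem : ∀ i, i ≤ n → u i ∈ Icc s t := fun i hi => by
    obtain ⟨h1, h2⟩ := hP.mem hi
    exact ⟨h1, h2⟩
  calc ∑ i ∈ Finset.range n,
        edist (f (u i)) (f (u (i + 1))) ^ p / ENNReal.ofReal (u (i + 1) - u i) ^ (β * p - 1)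
      ≤ ∑ i ∈ Finset.range n, CGRR β p * Jdbl g β p (u i) (u (i + 1)) := by
        refine Finset.sum_le_sum fun i hi => ?_
        simp only [Finset.mem_range] at hi
        have hui : u i < u (i + 1) := hP.2.2 i hi
        rw [heq (u i) (humem i hi.le), heq (u (i + 1)) (humem (i + 1) hi)]
        rw [ENNReal.div_le_iff (ofReal_rpow_ne_zero (by linarith) _)
          (ofReal_rpow_ne_top (by linarith) _)]
        calc edist (g (u i)) (g (u (i + 1))) ^ p
            ≤ CGRR β p * ENNReal.ofReal (u (i + 1) - u i) ^ (β * p - 1) *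
              Jdbl g β p (u i) (u (i + 1)) := grr_main g hg hp0 hβp hui
          _ = CGRR β p * Jdbl g β p (u i) (u (i + 1)) *
              ENNReal.ofReal (u (i + 1) - u i) ^ (β * p - 1) := by ring
    _ = CGRR β p * ∑ i ∈ Finset.range n, Jdbl g β p (u i) (u (i + 1)) :=
        (Finset.mul_sum _ _ _).symm
    _ ≤ CGRR β p * Jdbl g β p s t := by
        apply mul_le_mul_right
        -- sum of double integrals over sub-squares
        set c : ℕ → ℝ := fun j => u (min j n) with hc
        have hcj : ∀ j, c j ≤ c (j + 1) := by
          intro j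
          simp only [hc]
          apply hP.mono (min_le_min (Nat.le_succ j) le_rfl) (min_le_right _ _)
        calc ∑ i ∈ Finset.range n, Jdbl g β p (u i) (u (i + 1))
            ≤ ∑ i ∈ Finset.range n, ∫⁻ w in Ioc (u i) (u (i + 1)),
                ∫⁻ v in Ioc s t, PhiK g β p w v := by
              refine Finset.sum_le_sum fun i hi => ?_
              simp only [Finset.mem_range] at hi
              exact lintegral_mono fun w => lintegral_mono'
                (Measure.restrict_mono
                  (Ioc_subset_Ioc (humem i hi.le).1 (humem (i + 1) hi).2) le_rfl) le_rfl
          _ = ∑ i ∈ Finset.range n, ∫⁻ w in Ioc (c i) (c (i + 1)),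
                ∫⁻ v in Ioc s t, PhiK g β p w v := by
              refine Finset.sum_congr rfl fun i hi => ?_
              simp only [Finset.mem_range] at hi
              simp only [hc]
              rw [Nat.min_eq_left (by omega), Nat.min_eq_left (by omega)]
          _ ≤ ∫⁻ w in Ioc (c 0) (c n), ∫⁻ v in Ioc s t, PhiK g β p w v :=
              sum_parts_le_lintegral _ hcj n
          _ = Jdbl g β p s t := by
              simp only [hc, Nat.min_eq_left (Nat.zero_le n), Nat.min_self, hP.1, hP.2.1]
              rfl

/-- Part 1: Sobolev implies finite Riesz variation. -/
lemma part1 {f : ℝ → E} {T β p : ℝ} (hT : 0 < T) (hp0 : 0 < p) (hβp : 1 < β * p)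
    (hf : ContinuousOn f (Icc 0 T)) (hsob : sobNorm f β p 0 T ≠ ⊤) :
    VNorm f β p 0 T ≠ ⊤ := by
  obtain ⟨g, hg, heq⟩ := exists_cont_ext hT.le hf
  have hJf : Jdbl f β p 0 T ≠ ⊤ := by
    intro h
    rw [sobNorm_eq_Jdbl, h, ENNReal.top_rpow_of_pos (by positivity)] at hsob
    exact hsob rfl
  have hJg : Jdbl g β p 0 T ≠ ⊤ := by
    rw [← Jdbl_congr f g heq]
    exact hJf
  have hV : VSup f β p 0 T ≠ ⊤ :=
    ne_top_of_le_ne_top (ENNReal.mul_ne_top (CGRR_ne_top hp0 hβp) hJg)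
      (VSup_le_CJ f g hg hp0 hβp heq)
  rw [VNorm_eq_VSup]
  exact ENNReal.rpow_ne_top_of_nonneg (by positivity) hV

/-- Part 2: finite Riesz variation implies finite Nikolskii norm. -/
lemma part2 {f : ℝ → E} {T β p : ℝ} (hT : 0 < T) (hp0 : 0 < p)
    (hV : VNorm f β p 0 T ≠ ⊤) : nikNorm f β p 0 T ≠ ⊤ := by
  have hVS : VSup f β p 0 T ≠ ⊤ := by
    intro h
    rw [VNorm_eq_VSup, h, ENNReal.top_rpow_of_pos (by positivity)] at hV
    exact hV rfl
  refine ne_top_of_le_ne_top ?_ (nikNorm_le_VSup f hp0 (by linarith : (0:ℝ) < T))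
  exact ENNReal.rpow_ne_top_of_nonneg (by positivity)
    (ENNReal.mul_ne_top (by norm_num) hVS)

/-- Part 4: refined Nikolskii controls Nikolskii. -/
lemma part4 {f : ℝ → E} {T δ' p : ℝ} (hT : 0 < T) (hp0 : 0 < p)
    (hhat : nikHatNorm f δ' p 0 T ≠ ⊤) : nikNorm f δ' p 0 T ≠ ⊤ := by
  have hP : IsPart 0 T 1 (fun i => if i = 0 then (0:ℝ) else T) := by
    refine ⟨by simp, by simp, fun i hi => ?_⟩
    interval_cases i
    simpa using hT
  have hle : nikNorm f δ' p 0 T ≤ nikHatNorm f δ' p 0 T := by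
    have h1 : nikNorm f δ' p 0 T ^ p ≤ ⨆ n, ⨆ u, ⨆ _ : IsPart 0 T n u,
        ∑ i ∈ Finset.range n, nikNorm f δ' p (u i) (u (i + 1)) ^ p := by
      refine le_iSup_of_le 1 (le_iSup_of_le (fun i => if i = 0 then (0:ℝ) else T)
        (le_iSup_of_le hP ?_))
      rw [Finset.sum_range_one]
      simp
    calc nikNorm f δ' p 0 T = (nikNorm f δ' p 0 T ^ p) ^ (1 / p) := by
          rw [← ENNReal.rpow_mul, mul_one_div, div_self hp0.ne', ENNReal.rpow_one]
      _ ≤ (⨆ n, ⨆ u, ⨆ _ : IsPart 0 T n u,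
            ∑ i ∈ Finset.range n, nikNorm f δ' p (u i) (u (i + 1)) ^ p) ^ (1 / p) :=
          ENNReal.rpow_le_rpow h1 (by positivity)
      _ = nikHatNorm f δ' p 0 T := rfl
  exact ne_top_of_le_ne_top hhat hle

end Assemble
section Fubini
open Set MeasureTheory
variable {E : Type*} [PseudoEMetricSpace E]

lemma nik_bound {f : ℝ → E} {T β p : ℝ} (hp0 : 0 < p) {h : ℝ} (hh0 : 0 < h) (hhT : h ≤ T) :
    ∫⁻ r in Ioc 0 (T - h), edist (f r) (f (r + h)) ^ p ≤
      ENNReal.ofReal h ^ (β * p) * nikNorm f β p 0 T ^ p := by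
  have hne0 : ENNReal.ofReal h ≠ 0 := (ENNReal.ofReal_pos.mpr hh0).ne'
  have hnet : ENNReal.ofReal h ≠ ⊤ := ENNReal.ofReal_ne_top
  have hle : ENNReal.ofReal h ^ (-β) *
      (∫⁻ r in Ioc 0 (T - h), edist (f r) (f (r + h)) ^ p) ^ (1 / p) ≤ nikNorm f β p 0 T :=
    le_iSup_of_le h (le_iSup_of_le ⟨hh0, by linarith⟩ le_rfl)
  have h1 : (∫⁻ r in Ioc 0 (T - h), edist (f r) (f (r + h)) ^ p) ^ (1 / p) ≤
      ENNReal.ofReal h ^ β * nikNorm f β p 0 T := by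
    have h2 := mul_le_mul_right hle (ENNReal.ofReal h ^ β)
    rwa [← mul_assoc, ← ENNReal.rpow_add _ _ hne0 hnet, add_neg_cancel, ENNReal.rpow_zero,
      one_mul] at h2
  have h3 := ENNReal.rpow_le_rpow h1 hp0.le
  rwa [← ENNReal.rpow_mul, one_div, inv_mul_cancel₀ hp0.ne', ENNReal.rpow_one,
    ENNReal.mul_rpow_of_nonneg _ _ hp0.le, ← ENNReal.rpow_mul] at h3

lemma Jdbl_lt_top_of_nik {f g : ℝ → E} {T β β' p : ℝ} (hg : Continuous g)
    (heq : ∀ x ∈ Icc 0 T, f x = g x) (hT : 0 < T) (hp0 : 0 < p)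
    (hββ' : β' < β) (hexp : 0 ≤ 1 + β' * p)
    (hN : nikNorm f β p 0 T ≠ ⊤) : Jdbl g β' p 0 T ≠ ⊤ := by
  set Np := nikNorm f β p 0 T ^ p with hNp
  have hNpt : Np ≠ ⊤ := ENNReal.rpow_ne_top_of_nonneg hp0.le hN
  set cc := β * p - (1 + β' * p) with hcc
  have hcc1 : -1 < cc := by
    rw [hcc]
    nlinarith
  set Sset : Set (ℝ × ℝ) := {q : ℝ × ℝ | q.1 ∈ Ioc 0 T ∧ q.2 + q.1 ∈ Ioc 0 T} with hSset
  have hSsetm : MeasurableSet Sset := by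
    have h1 : Sset = (fun q : ℝ × ℝ => q.1) ⁻¹' (Ioc 0 T) ∩
        (fun q : ℝ × ℝ => q.2 + q.1) ⁻¹' (Ioc 0 T) := rfl
    rw [h1]
    exact (measurable_fst measurableSet_Ioc).inter
      ((measurable_snd.add measurable_fst) measurableSet_Ioc)
  set G : ℝ × ℝ → ℝ≥0∞ := Sset.indicator
    (fun q => edist (g q.1) (g (q.2 + q.1)) ^ p / ENNReal.ofReal |q.2| ^ (1 + β' * p)) with hG
  have hGm : Measurable G := by
    rw [hG]
    apply Measurable.indicator _ hSsetm
    apply Measurable.div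
    · exact (((hg.comp continuous_fst).edist
        (hg.comp (continuous_snd.add continuous_fst))).measurable).pow_const _
    · exact ((ENNReal.continuous_ofReal.comp continuous_snd.abs).measurable).pow_const _
  -- Step (a)
  have ha : Jdbl g β' p 0 T = ∫⁻ w, ∫⁻ s, G (w, s) := by
    unfold Jdbl
    rw [← lintegral_indicator measurableSet_Ioc]
    refine lintegral_congr fun w => ?_
    by_cases hw : w ∈ Ioc 0 T
    · rw [indicator_of_mem hw, ← lintegral_indicator measurableSet_Ioc,
        ← lintegral_add_right_eq_self
          (fun v => (Ioc 0 T).indicator (fun v => PhiK g β' p w v) v) w]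
      refine lintegral_congr fun s => ?_
      rw [hG]
      by_cases hs : s + w ∈ Ioc 0 T
      · rw [indicator_of_mem hs, indicator_of_mem (show (w, s) ∈ Sset from ⟨hw, hs⟩)]
        unfold PhiK
        rw [add_sub_cancel_right]
      · rw [indicator_of_notMem hs,
          indicator_of_notMem (show (w, s) ∉ Sset from fun hmem => hs hmem.2)]
    · rw [indicator_of_notMem hw]
      have hzero : ∀ s, G (w, s) = 0 := fun s => by
        rw [hG]
        exact indicator_of_notMem (fun hmem => hw hmem.1) _
      simp [hzero]
  -- Step (b)
  have hb : ∫⁻ w, ∫⁻ s, G (w, s) = ∫⁻ s, ∫⁻ w, G (w, s) :=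
    lintegral_lintegral_swap hGm.aemeasurable
  -- the dominating function
  set k : ℝ → ℝ≥0∞ := (Ioc 0 T ∪ Ico (-T) 0).indicator
    (fun s => ENNReal.ofReal |s| ^ cc * Np) with hk
  -- common tail computation
  have tail : ∀ h' : ℝ, 0 < h' →  h' ≤ T →
      (∫⁻ v in Ioc 0 (T - h'), edist (g v) (g (v + h')) ^ p) *
        (ENNReal.ofReal h' ^ (1 + β' * p))⁻¹ ≤ ENNReal.ofReal h' ^ cc * Np := by
    intro h' h0 hT'
    have hne0 : ENNReal.ofReal h' ≠ 0 := (ENNReal.ofReal_pos.mpr h0).ne'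
    have hnet : ENNReal.ofReal h' ≠ ⊤ := ENNReal.ofReal_ne_top
    have hcongr : ∫⁻ v in Ioc 0 (T - h'), edist (g v) (g (v + h')) ^ p
        = ∫⁻ v in Ioc 0 (T - h'), edist (f v) (f (v + h')) ^ p := by
      refine lintegral_congr_ae ?_
      filter_upwards [self_mem_ae_restrict (measurableSet_Ioc (a := (0:ℝ)) (b := T - h'))]
        with v hv
      rw [heq v ⟨hv.1.le, by linarith [hv.2]⟩,
        heq (v + h') ⟨by linarith [hv.1], by linarith [hv.2]⟩]
    rw [hcongr]
    calc (∫⁻ v in Ioc 0 (T - h'), edist (f v) (f (v + h')) ^ p) *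
          (ENNReal.ofReal h' ^ (1 + β' * p))⁻¹
        ≤ (ENNReal.ofReal h' ^ (β * p) * Np) * (ENNReal.ofReal h' ^ (1 + β' * p))⁻¹ :=
          mul_le_mul_left (nik_bound hp0 h0 hT') _
      _ = ENNReal.ofReal h' ^ cc * Np := by
          rw [← ENNReal.rpow_neg, mul_comm (ENNReal.ofReal h' ^ (β * p)) Np, mul_assoc,
            ← ENNReal.rpow_add _ _ hne0 hnet]
          rw [show β * p + -(1 + β' * p) = cc from by rw [hcc]; ring]
          exact mul_comm _ _
  -- Step (c)
  have hc : ∀ s, ∫⁻ w, G (w, s) ≤ k s := by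
    intro s
    rcases lt_trichotomy s 0 with hneg | hzero | hpos
    · -- s < 0
      by_cases hsT : -T ≤ s
      · have hs0 : 0 < -s := by linarith
        have hsT' : -s ≤ T := by linarith
        have hGle : ∀ w, G (w, s) ≤ (Ioc (-s) T).indicator
            (fun w => edist (g w) (g (s + w)) ^ p / ENNReal.ofReal |s| ^ (1 + β' * p)) w := by
          intro w
          by_cases hmem : (w, s) ∈ Sset
          · rw [hG, indicator_of_mem hmem]
            obtain ⟨h1, h2⟩ := hmem
            rw [indicator_of_mem (show w ∈ Ioc (-s) T from ⟨by linarith [h2.1], h1.2⟩)]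
          · rw [hG, indicator_of_notMem hmem]
            exact zero_le
        calc ∫⁻ w, G (w, s)
            ≤ ∫⁻ w, (Ioc (-s) T).indicator
                (fun w => edist (g w) (g (s + w)) ^ p /
                  ENNReal.ofReal |s| ^ (1 + β' * p)) w := lintegral_mono hGle
          _ = ∫⁻ v, (Ioc (-s) T).indicator
                (fun w => edist (g w) (g (s + w)) ^ p /
                  ENNReal.ofReal |s| ^ (1 + β' * p)) (v + -s) :=
              (lintegral_add_right_eq_self _ (-s)).symm
          _ = ∫⁻ v, (Ioc 0 (T - -s)).indicator
                (fun v => edist (g v) (g (v + -s)) ^ p /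
                  ENNReal.ofReal |s| ^ (1 + β' * p)) v := by
              refine lintegral_congr fun v => ?_
              by_cases hv : v ∈ Ioc 0 (T - -s)
              · rw [indicator_of_mem (show v + -s ∈ Ioc (-s) T from
                  ⟨by linarith [hv.1], by linarith [hv.2]⟩), indicator_of_mem hv]
                have e1 : s + (v + -s) = v := by ring
                rw [e1]
                rw [edist_comm]
              · rw [indicator_of_notMem hv, indicator_of_notMem (show v + -s ∉ Ioc (-s) T
                  from fun hin => hv ⟨by linarith [hin.1], by linarith [hin.2]⟩)]
          _ = (∫⁻ v in Ioc 0 (T - -s), edist (g v) (g (v + -s)) ^ p) *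
                (ENNReal.ofReal |s| ^ (1 + β' * p))⁻¹ := by
              rw [lintegral_indicator measurableSet_Ioc]
              simp only [div_eq_mul_inv]
              exact lintegral_mul_const' _ _
                (ENNReal.inv_ne_top.mpr (ofReal_rpow_ne_zero (by linarith [abs_of_neg hneg]) _))
          _ ≤ ENNReal.ofReal |s| ^ cc * Np := by
              rw [abs_of_neg hneg]
              exact tail (-s) hs0 hsT'
          _ = k s := by
              rw [hk]
              exact (indicator_of_mem
                (show s ∈ Ioc 0 T ∪ Ico (-T) 0 from Or.inr ⟨hsT, hneg⟩)
                (fun s : ℝ => ENNReal.ofReal |s| ^ cc * Np)).symm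
      · -- s < -T : G (w,s) = 0
        have hzero : ∀ w, G (w, s) = 0 := by
          intro w
          rw [hG]
          refine indicator_of_notMem (fun hmem => ?_) _
          obtain ⟨h1, h2⟩ := hmem
          have : w ≤ T := h1.2
          have : 0 < s + w := h2.1
          linarith [not_le.mp hsT]
        simp [hzero]
    · -- s = 0
      subst hzero
      have hzero : ∀ w, G (w, 0) = 0 := by
        intro w
        rw [hG]
        refine le_antisymm (le_trans (indicator_le_self _ _ _) ?_) (zero_le)
        simp only [zero_add]
        rw [edist_self, ENNReal.zero_rpow_of_pos hp0, ENNReal.zero_div]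
      simp [hzero]
    · -- 0 < s
      by_cases hsT : s ≤ T
      · have hGle : ∀ w, G (w, s) ≤ (Ioc 0 (T - s)).indicator
            (fun w => edist (g w) (g (s + w)) ^ p / ENNReal.ofReal |s| ^ (1 + β' * p)) w := by
          intro w
          by_cases hmem : (w, s) ∈ Sset
          · rw [hG, indicator_of_mem hmem]
            obtain ⟨h1, h2⟩ := hmem
            rw [indicator_of_mem (show w ∈ Ioc 0 (T - s) from ⟨h1.1, by linarith [h2.2]⟩)]
          · rw [hG, indicator_of_notMem hmem]
            exact zero_le
        calc ∫⁻ w, G (w, s)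
            ≤ ∫⁻ w, (Ioc 0 (T - s)).indicator
                (fun w => edist (g w) (g (s + w)) ^ p /
                  ENNReal.ofReal |s| ^ (1 + β' * p)) w := lintegral_mono hGle
          _ = ∫⁻ w in Ioc 0 (T - s), edist (g w) (g (s + w)) ^ p /
                ENNReal.ofReal |s| ^ (1 + β' * p) := lintegral_indicator measurableSet_Ioc _
          _ = (∫⁻ w in Ioc 0 (T - s), edist (g w) (g (w + s)) ^ p) *
                (ENNReal.ofReal |s| ^ (1 + β' * p))⁻¹ := by
              rw [show (fun w => edist (g w) (g (s + w)) ^ p /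
                  ENNReal.ofReal |s| ^ (1 + β' * p)) = fun w =>
                    edist (g w) (g (w + s)) ^ p * (ENNReal.ofReal |s| ^ (1 + β' * p))⁻¹
                from funext fun w => by rw [add_comm s w, div_eq_mul_inv]]
              exact lintegral_mul_const' _ _
                (ENNReal.inv_ne_top.mpr (ofReal_rpow_ne_zero (abs_pos.mpr hpos.ne') _))
          _ ≤ ENNReal.ofReal |s| ^ cc * Np := by
              rw [abs_of_pos hpos]
              exact tail s hpos hsT
          _ = k s := by
              rw [hk]
              exact (indicator_of_mem
                (show s ∈ Ioc 0 T ∪ Ico (-T) 0 from Or.inl ⟨hpos, hsT⟩)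
                (fun s : ℝ => ENNReal.ofReal |s| ^ cc * Np)).symm
      · have hzero : ∀ w, G (w, s) = 0 := by
          intro w
          rw [hG]
          refine indicator_of_notMem (fun hmem => ?_) _
          obtain ⟨h1, h2⟩ := hmem
          have h3 : 0 < w := h1.1
          have h4 : s + w ≤ T := h2.2
          linarith [not_le.mp hsT]
        simp [hzero]
  -- Step (d)
  have hIm : MeasurableSet (Ioc (0:ℝ) T ∪ Ico (-T) 0) :=
    measurableSet_Ioc.union measurableSet_Ico
  have hI1 : (∫⁻ s in Ioc 0 T, ENNReal.ofReal |s| ^ cc * Np) < ⊤ := by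
    rw [lintegral_mul_const' Np _ hNpt]
    refine ENNReal.mul_lt_top ?_ hNpt.lt_top
    have hint : IntegrableOn (fun s : ℝ => s ^ cc) (Ioc 0 T) volume := by
      have := intervalIntegral.intervalIntegrable_rpow' (a := 0) (b := T) hcc1
      rwa [intervalIntegrable_iff_integrableOn_Ioc_of_le hT.le] at this
    have hfin : (∫⁻ s in Ioc 0 T, (‖(s : ℝ) ^ cc‖₊ : ℝ≥0∞)) < ⊤ := hint.2
    refine lt_of_le_of_lt (lintegral_mono_ae ?_) hfin
    filter_upwards [self_mem_ae_restrict (measurableSet_Ioc (a := (0:ℝ)) (b := T))]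
      with sx hsx
    rw [abs_of_pos hsx.1, ENNReal.ofReal_rpow_of_pos hsx.1, ← enorm_eq_nnnorm, Real.enorm_eq_ofReal_abs]
    exact ENNReal.ofReal_le_ofReal (le_abs_self _)
  have hI2 : (∫⁻ s in Ico (-T) 0, ENNReal.ofReal |s| ^ cc * Np)
      = ∫⁻ s in Ioc 0 T, ENNReal.ofReal |s| ^ cc * Np := by
    rw [← lintegral_indicator measurableSet_Ico, ← lintegral_indicator measurableSet_Ioc]
    have hmeas : Measurable ((Ico (-T) (0:ℝ)).indicator
        (fun s => ENNReal.ofReal |s| ^ cc * Np)) := by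
      apply Measurable.indicator _ measurableSet_Ico
      exact (((ENNReal.continuous_ofReal.comp continuous_abs).measurable).pow_const _).mul_const _
    rw [← (Measure.measurePreserving_neg (volume : Measure ℝ)).lintegral_comp hmeas]
    refine lintegral_congr fun v => ?_
    by_cases hv : v ∈ Ioc (0:ℝ) T
    · rw [indicator_of_mem (show -v ∈ Ico (-T) (0:ℝ) from
        ⟨by linarith [hv.2], by linarith [hv.1]⟩), indicator_of_mem hv, abs_neg]
    · rw [indicator_of_notMem hv, indicator_of_notMem (show -v ∉ Ico (-T) (0:ℝ) from
        fun hin => hv ⟨by linarith [hin.2], by linarith [hin.1]⟩)]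
  have hd : ∫⁻ s, k s < ⊤ := by
    rw [hk, lintegral_indicator hIm]
    refine lt_of_le_of_lt ?_
      (show (∫⁻ s in Ioc 0 T, ENNReal.ofReal |s| ^ cc * Np) +
        (∫⁻ s in Ico (-T) 0, ENNReal.ofReal |s| ^ cc * Np) < ⊤ from by
        rw [hI2]
        exact ENNReal.add_lt_top.mpr ⟨hI1, hI1⟩)
    rw [← lintegral_add_measure]
    exact lintegral_mono' (Measure.restrict_union_le _ _) le_rfl
  rw [ha, hb]
  exact (lt_of_le_of_lt (lintegral_mono hc) hd).ne

end Fubini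
section Part3
open Set MeasureTheory
variable {E : Type*} [PseudoEMetricSpace E]

lemma nikNorm_le_aux (f : ℝ → E) {δ' β' p a b : ℝ} (hp0 : 0 < p) (hab : a < b)
    (hδβ : δ' ≤ β') :
    nikNorm f δ' p a b ≤
      (ENNReal.ofReal (b - a) ^ ((β' - δ') * p) * (2 * VSup f β' p a b)) ^ (1 / p) := by
  refine iSup_le fun h => iSup_le fun hcond => ?_
  obtain ⟨hh0, hhb⟩ := hcond
  have hne0 : ENNReal.ofReal h ≠ 0 := (ENNReal.ofReal_pos.mpr hh0).ne'
  have hnet : ENNReal.ofReal h ≠ ⊤ := ENNReal.ofReal_ne_top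
  have heq1 : ENNReal.ofReal h ^ (-δ') *
      (∫⁻ r in Ioc a (b - h), edist (f r) (f (r + h)) ^ p) ^ (1 / p) =
      (ENNReal.ofReal h ^ (-(δ' * p)) *
        ∫⁻ r in Ioc a (b - h), edist (f r) (f (r + h)) ^ p) ^ (1 / p) := by
    rw [ENNReal.mul_rpow_of_nonneg _ _ (by positivity : (0:ℝ) ≤ 1 / p)]
    congr 1
    rw [← ENNReal.rpow_mul]
    congr 1
    field_simp
  rw [heq1]
  refine ENNReal.rpow_le_rpow ?_ (by positivity)
  have hsplit : ENNReal.ofReal h ^ (-(δ' * p)) =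
      ENNReal.ofReal h ^ ((β' - δ') * p) * ENNReal.ofReal h ^ (-(β' * p)) := by
    rw [← ENNReal.rpow_add _ _ hne0 hnet]
    congr 1
    ring
  rw [hsplit, mul_assoc]
  exact mul_le_mul'
    (ENNReal.rpow_le_rpow (ENNReal.ofReal_le_ofReal (by linarith))
      (mul_nonneg (by linarith) hp0.le))
    (nik_core f hp0 hab hh0 hhb)

/-- Part 3: `N^{δ+ε,p} ⊆ \hat N^{δ,p}`. -/
lemma part3 {f : ℝ → E} {T δ p ε : ℝ} (hT : 0 < T) (hp : 1 < p) (hδp : 1 / p < δ)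
    (hε : 0 < ε) (hf : ContinuousOn f (Icc 0 T))
    (hN : nikNorm f (δ + ε) p 0 T ≠ ⊤) : nikHatNorm f δ p 0 T ≠ ⊤ := by
  have hp0 : 0 < p := by linarith
  set β' := δ + ε / 2 with hβ'
  have hδpp : 1 < δ * p := by
    rw [div_lt_iff₀ hp0] at hδp
    linarith
  have hβ'p : 1 < β' * p := by
    rw [hβ']
    nlinarith
  obtain ⟨g, hg, heq⟩ := exists_cont_ext hT.le hf
  have hJ : Jdbl g β' p 0 T ≠ ⊤ :=
    Jdbl_lt_top_of_nik hg heq hT hp0 (by rw [hβ']; linarith : β' < δ + ε)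
      (by nlinarith : 0 ≤ 1 + β' * p) hN
  have hV : VSup f β' p 0 T ≠ ⊤ :=
    ne_top_of_le_ne_top (ENNReal.mul_ne_top (CGRR_ne_top hp0 hβ'p) hJ)
      (VSup_le_CJ f g hg hp0 hβ'p heq)
  set c1 := ENNReal.ofReal T ^ ((β' - δ) * p) with hc1
  have hc1t : c1 ≠ ⊤ := ofReal_rpow_ne_top hT _
  set X := c1 * 2 * VSup f β' p 0 T with hX
  have hXt : X ≠ ⊤ :=
    ENNReal.mul_ne_top (ENNReal.mul_ne_top hc1t (by norm_num)) hV
  have hsup : (⨆ n, ⨆ u, ⨆ _ : IsPart 0 T n u,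
      ∑ i ∈ Finset.range n, nikNorm f δ p (u i) (u (i + 1)) ^ p) ≤ X := by
    refine iSup_le fun n => iSup_le fun u => iSup_le fun hP => ?_
    have hchain : ∑ i ∈ Finset.range n, VSup f β' p (u i) (u (i + 1)) ≤
        VSup f β' p 0 T := by
      set c : ℕ → ℝ := fun j => u (min j n) with hc
      have hcj : ∀ j, c j ≤ c (j + 1) := fun j =>
        hP.mono (min_le_min (Nat.le_succ j) le_rfl) (min_le_right _ _)
      calc ∑ i ∈ Finset.range n, VSup f β' p (u i) (u (i + 1))
          = ∑ i ∈ Finset.range n, VSup f β' p (c i) (c (i + 1)) := by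
            refine Finset.sum_congr rfl fun i hi => ?_
            simp only [Finset.mem_range] at hi
            simp only [hc]
            rw [Nat.min_eq_left (by omega), Nat.min_eq_left (by omega)]
        _ ≤ VSup f β' p (c 0) (c n) := sum_VSup_le f β' p hcj n
        _ = VSup f β' p 0 T := by
            simp only [hc, Nat.min_eq_left (Nat.zero_le n), Nat.min_self, hP.1, hP.2.1]
    calc ∑ i ∈ Finset.range n, nikNorm f δ p (u i) (u (i + 1)) ^ p
        ≤ ∑ i ∈ Finset.range n, c1 * 2 * VSup f β' p (u i) (u (i + 1)) := by
          refine Finset.sum_le_sum fun i hi => ?_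
          simp only [Finset.mem_range] at hi
          have hui : u i < u (i + 1) := hP.2.2 i hi
          have hb1 := nikNorm_le_aux f (δ' := δ) (β' := β') hp0 hui (by rw [hβ']; linarith)
          have h2 := ENNReal.rpow_le_rpow hb1 hp0.le
          rw [← ENNReal.rpow_mul, one_div, inv_mul_cancel₀ hp0.ne', ENNReal.rpow_one] at h2
          refine h2.trans ?_
          rw [mul_assoc]
          apply mul_le_mul_left
          refine ENNReal.rpow_le_rpow (ENNReal.ofReal_le_ofReal ?_)
            (mul_nonneg (by rw [hβ']; linarith) hp0.le)
          have hm1 := hP.mem (Nat.le_of_lt hi)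
          have hm2 := hP.mem hi
          linarith [hm1.1, hm2.2]
      _ = c1 * 2 * ∑ i ∈ Finset.range n, VSup f β' p (u i) (u (i + 1)) :=
          (Finset.mul_sum _ _ _).symm
      _ ≤ X := by
          rw [hX]
          exact mul_le_mul_right hchain _
  exact ne_top_of_le_ne_top (ENNReal.rpow_ne_top_of_nonneg (by positivity) hXt)
    (ENNReal.rpow_le_rpow hsup (by positivity))

end Part3
/-- inclusions `W^{δ,p} ⊆ V^{δ,p} ⊆ N^{δ,p}` and
`N^{δ+ε,p} ⊆ \hat N^{δ,p} ⊆ N^{δ,p}`. -/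
theorem riesz_nikolskii_inclusions {E : Type*} [PseudoEMetricSpace E] (T δ p ε : ℝ)
    (hT : 0 < T) (hδ : 0 < δ) (hδ1 : δ < 1) (hp : 1 < p) (hδp : 1 / p < δ)
    (hε : 0 < ε) (hε1 : ε < 1 - δ) :
    ∀ f : ℝ → E, ContinuousOn f (Set.Icc 0 T) →
      (sobNorm f δ p 0 T ≠ ⊤ → VNorm f δ p 0 T ≠ ⊤) ∧
      (VNorm f δ p 0 T ≠ ⊤ → nikNorm f δ p 0 T ≠ ⊤) ∧
      (nikNorm f (δ + ε) p 0 T ≠ ⊤ → nikHatNorm f δ p 0 T ≠ ⊤) ∧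
      (nikHatNorm f δ p 0 T ≠ ⊤ → nikNorm f δ p 0 T ≠ ⊤) := by
  intro f hf
  have hp0 : 0 < p := by linarith
  have hδpp : 1 < δ * p := by
    rw [div_lt_iff₀ hp0] at hδp
    linarith
  exact ⟨fun hsob => part1 hT hp0 hδpp hf hsob,
    fun hV => part2 hT hp0 hV,
    fun hN => part3 hT hp hδp hε hf hN,
    fun hhat => part4 hT hp0 hhat⟩
end
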